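/- arXiv:2504.04049 — 8 statements merged into one kernel-verified Lean document; each statement's English description precedes it below -/
import Mathlib

section
/- Let (d_{n,k}) = (g; f_1,…,f_ℓ) be a multiple Riordan array and let h be an ℓ-th root of f_1⋯f_ℓ. Fix m with 0 ≤ m ≤ ℓ−1 and suppose Q ∈ K[[t]] satisfies Q·h^m = f_1⋯f_m (empty product equal to 1, so Q = 1 when m = 0). Then for every sequence (a_k)_{k≥0} in K and every n ≥ 0, Σ_{k≥0, ℓk+m≤n} d_{n, ℓk+m}·a_k = [t^n]( g·Q·A(h) ), where A = Σ_{k≥0} a_k t^{ℓk+m} (first fundamental theorem of multiple Riordan arrays). -/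
open PowerSeries Finset

/-- Formal substitution `F(u)`: for `u` with zero constant term, the `n`-th coefficient of
`F(u)` is `∑_{k ≤ n} F_k · [t^n] u^k`. -/
noncomputable def psComp {K : Type*} [CommRing K] (F u : K⟦X⟧) : K⟦X⟧ :=
  PowerSeries.mk fun n => ∑ k ∈ Finset.range (n + 1), coeff k F * coeff n (u ^ k)

/-- Entry `d_{n,k}` of the multiple Riordan array `(g; f_0, …, f_{ℓ-1})`: the `k`-th column,
`k = qℓ + m`, has generating function `g · f_0⋯f_{m-1} · (f_0⋯f_{ℓ-1})^q`. -/
noncomputable def mrEntry {K : Type*} [CommRing K] (ℓ : ℕ) (g : K⟦X⟧) (f : ℕ → K⟦X⟧)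
    (n k : ℕ) : K :=
  coeff n (g * (∏ i ∈ Finset.range (k % ℓ), f i) * (∏ i ∈ Finset.range ℓ, f i) ^ (k / ℓ))

/-- First fundamental theorem of multiple Riordan arrays. -/
theorem stmt0 {K : Type*} [Field K] [CharZero K] (ℓ : ℕ) (hℓ : 2 ≤ ℓ)
    (g : K⟦X⟧) (f : ℕ → K⟦X⟧)
    (hg : ∀ n, ¬ (ℓ ∣ n) → coeff n g = 0) (hg0 : constantCoeff g ≠ 0)
    (hf : ∀ i < ℓ, ∀ n, n % ℓ ≠ 1 → coeff n (f i) = 0)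
    (hf1 : ∀ i < ℓ, coeff 1 (f i) ≠ 0)
    (h : K⟦X⟧) (hhs : ∀ n, n % ℓ ≠ 1 → coeff n h = 0) (hh1 : coeff 1 h ≠ 0)
    (hhl : h ^ ℓ = ∏ i ∈ Finset.range ℓ, f i)
    (m : ℕ) (hm : m < ℓ)
    (Q : K⟦X⟧) (hQ : Q * h ^ m = ∏ i ∈ Finset.range m, f i)
    (a : ℕ → K)
    (A : K⟦X⟧) (hA : A = PowerSeries.mk fun n => if n % ℓ = m then a ((n - m) / ℓ) else 0)
    (d : ℕ → ℕ → K) (hd : ∀ n k, d n k = mrEntry ℓ g f n k) :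
    ∀ n, ∑ k ∈ Finset.filter (fun k => ℓ * k + m ≤ n) (Finset.range (n + 1)),
        d n (ℓ * k + m) * a k
      = coeff n (g * Q * psComp A h) := by
  intro n
  have hℓ0 : 0 < ℓ := by omega
  have hconst : constantCoeff h = 0 := by
    have := hhs 0 (by rw [Nat.zero_mod]; omega)
    simpa using this
  have hXdvd : (X : K⟦X⟧) ∣ h := X_dvd_iff.mpr hconst
  have hzero : ∀ j q : ℕ, q < j → coeff q (h ^ j) = 0 := by
    intro j q hq
    exact (X_pow_dvd_iff.mp (pow_dvd_pow_of_dvd hXdvd j)) q hq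
  have hcol : ∀ k, mrEntry ℓ g f n (ℓ * k + m) = coeff n (g * Q * h ^ (ℓ * k + m)) := by
    intro k
    unfold mrEntry
    have h1 : (ℓ * k + m) % ℓ = m := by
      rw [Nat.mul_add_mod]; exact Nat.mod_eq_of_lt hm
    have h2 : (ℓ * k + m) / ℓ = k := by
      rw [Nat.mul_add_div hℓ0, Nat.div_eq_of_lt hm]; omega
    rw [h1, h2, ← hQ, ← hhl]
    congr 1
    rw [← pow_mul, pow_add]
    ring
  have hcomp : ∀ q ≤ n, coeff q (psComp A h)
      = ∑ j ∈ Finset.range (n + 1), coeff j A * coeff q (h ^ j) := by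
    intro q hq
    simp only [psComp, coeff_mk]
    refine Finset.sum_subset ?_ ?_
    · intro x hx; simp only [Finset.mem_range] at *; omega
    · intro j hj hj2
      simp only [Finset.mem_range] at hj hj2
      rw [hzero j q (by omega), mul_zero]
  have hR : coeff n (g * Q * psComp A h)
      = ∑ j ∈ Finset.range (n + 1), coeff j A * coeff n (g * Q * h ^ j) := by
    rw [coeff_mul]
    have hstep : ∀ x ∈ Finset.HasAntidiagonal.antidiagonal n,
        coeff x.1 (g * Q) * coeff x.2 (psComp A h)
        = ∑ j ∈ Finset.range (n + 1),
            coeff j A * (coeff x.1 (g * Q) * coeff x.2 (h ^ j)) := by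
      intro x hx
      rw [Finset.HasAntidiagonal.mem_antidiagonal] at hx
      rw [hcomp x.2 (by omega), Finset.mul_sum]
      exact Finset.sum_congr rfl fun j _ => by ring
    rw [Finset.sum_congr rfl hstep, Finset.sum_comm]
    refine Finset.sum_congr rfl fun j _ => ?_
    rw [coeff_mul, Finset.mul_sum]
  rw [hR]
  have hAc : ∀ j, coeff j A = if j % ℓ = m then a ((j - m) / ℓ) else 0 := by
    intro j; rw [hA, coeff_mk]
  have hback : ∀ j, j % ℓ = m → ℓ * ((j - m) / ℓ) + m = j := by
    intro j hj2
    have hmj : m ≤ j := by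
      rcases Nat.lt_or_ge j m with hlt | hge
      · rw [Nat.mod_eq_of_lt (by omega)] at hj2; omega
      · exact hge
    have hdm := Nat.div_add_mod j ℓ
    have hsub : j - m = ℓ * (j / ℓ) := by omega
    rw [hsub, Nat.mul_div_cancel_left _ hℓ0]
    omega
  have step1 : ∑ k ∈ Finset.filter (fun k => ℓ * k + m ≤ n) (Finset.range (n + 1)),
        d n (ℓ * k + m) * a k
      = ∑ j ∈ Finset.filter (fun j => j % ℓ = m) (Finset.range (n + 1)),
          coeff j A * coeff n (g * Q * h ^ j) := by
    refine Finset.sum_nbij' (fun k => ℓ * k + m) (fun j => (j - m) / ℓ) ?_ ?_ ?_ ?_ ?_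
    · intro k hk
      simp only [Finset.mem_filter, Finset.mem_range] at *
      refine ⟨by omega, ?_⟩
      rw [Nat.mul_add_mod]; exact Nat.mod_eq_of_lt hm
    · intro j hj
      simp only [Finset.mem_filter, Finset.mem_range] at *
      have h4 := hback j hj.2
      have h5 : (j - m) / ℓ ≤ j := Nat.le_trans (Nat.div_le_self _ _) (Nat.sub_le _ _)
      constructor <;> omega
    · intro k hk
      have h2 : (ℓ * k + m - m) / ℓ = k := by
        rw [Nat.add_sub_cancel, Nat.mul_div_cancel_left _ hℓ0]
      exact h2
    · intro j hj
      simp only [Finset.mem_filter, Finset.mem_range] at hj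
      exact hback j hj.2
    · intro k hk
      rw [hd, hcol, hAc]
      have h1 : (ℓ * k + m) % ℓ = m := by
        rw [Nat.mul_add_mod]; exact Nat.mod_eq_of_lt hm
      have h2 : (ℓ * k + m - m) / ℓ = k := by
        rw [Nat.add_sub_cancel, Nat.mul_div_cancel_left _ hℓ0]
      rw [h1, h2, if_pos rfl]
      ring
  rw [step1]
  refine Finset.sum_filter_of_ne ?_
  intro j hj hne
  by_contra hmod
  exact hne (by rw [hAc, if_neg hmod, zero_mul])
end

section
/- Let D = (d_{n,k}) = (g; f_1,…,f_ℓ) and E = (e_{n,k}) = (G; F_1,…,F_ℓ) be multiple Riordan arrays, let h be an ℓ-th root of f_1⋯f_ℓ, and suppose q_i ∈ K[[t]] satisfy f_i = q_i·h for i = 1,…,ℓ. Then g·G(h) = Σ c_k t^{ℓk} with c_0 ≠ 0, each q_i·F_i(h) = Σ c_{i,k} t^{ℓk+1} with c_{i,0} ≠ 0, and for all n, k ≥ 0 the matrix product satisfies Σ_{j=0}^{n} d_{n,j}·e_{j,k} = p_{n,k}, where (p_{n,k}) is the multiple Riordan array ( g·G(h); q_1·F_1(h), …, q_ℓ·F_ℓ(h)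 ). In particular, the product of two multiple Riordan arrays is a multiple Riordan array. -/
open PowerSeries Finset

section Helpers

variable {K : Type*} [CommRing K]

lemma coeff_pow_zero_of_lt {u : K⟦X⟧} (hu : constantCoeff u = 0) {n k : ℕ} (hnk : n < k) :
    coeff n (u ^ k) = 0 := by
  have hx : (X : K⟦X⟧) ^ k ∣ u ^ k := pow_dvd_pow_of_dvd (PowerSeries.X_dvd_iff.mpr hu) k
  exact (PowerSeries.X_pow_dvd_iff.mp hx) n hnk

lemma coeff_psComp (F u : K⟦X⟧) (n : ℕ) :
    coeff n (psComp F u) = ∑ k ∈ Finset.range (n + 1), coeff k F * coeff n (u ^ k) := by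
  simp [psComp]

lemma coeff_mul_psComp {u : K⟦X⟧} (hu : constantCoeff u = 0) (C E : K⟦X⟧) (n : ℕ) :
    coeff n (C * psComp E u)
      = ∑ j ∈ Finset.range (n + 1), coeff j E * coeff n (C * u ^ j) := by
  rw [PowerSeries.coeff_mul]
  have step : ∀ p ∈ Finset.HasAntidiagonal.antidiagonal n,
      coeff p.1 C * coeff p.2 (psComp E u)
        = ∑ j ∈ Finset.range (n + 1), coeff j E * (coeff p.1 C * coeff p.2 (u ^ j)) := by
    intro p hp
    have hp2 : p.2 ≤ n := by
      have := Finset.HasAntidiagonal.mem_antidiagonal.mp hp; omega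
    have : coeff p.2 (psComp E u)
        = ∑ j ∈ Finset.range (n + 1), coeff j E * coeff p.2 (u ^ j) := by
      rw [coeff_psComp]
      apply Finset.sum_subset
      · exact Finset.range_subset_range.mpr (by omega)
      · intro j hj hj2
        have : p.2 < j := by simp only [Finset.mem_range] at hj hj2; omega
        rw [coeff_pow_zero_of_lt hu this, mul_zero]
    rw [this, Finset.mul_sum]
    exact Finset.sum_congr rfl fun j _ => by ring
  rw [Finset.sum_congr rfl step, Finset.sum_comm]
  refine Finset.sum_congr rfl fun j _ => ?_
  rw [← Finset.mul_sum, PowerSeries.coeff_mul]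

lemma psComp_mul {u : K⟦X⟧} (hu : constantCoeff u = 0) (A B : K⟦X⟧) :
    psComp (A * B) u = psComp A u * psComp B u := by
  ext n
  have rhs1 : coeff n (psComp A u * psComp B u)
      = ∑ b ∈ Finset.range (n + 1), coeff b B * coeff n (psComp A u * u ^ b) :=
    coeff_mul_psComp hu _ B n
  have rhs2 : ∀ b, coeff n (psComp A u * u ^ b)
      = ∑ a ∈ Finset.range (n + 1), coeff a A * coeff n (u ^ (a + b)) := by
    intro b
    rw [mul_comm, coeff_mul_psComp hu _ A n]
    refine Finset.sum_congr rfl fun a _ => ?_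
    rw [← pow_add, add_comm b a]
  have lhs : coeff n (psComp (A * B) u)
      = ∑ p ∈ (Finset.range (n + 1)).biUnion (fun k => Finset.HasAntidiagonal.antidiagonal k),
          coeff p.1 A * coeff p.2 B * coeff n (u ^ (p.1 + p.2)) := by
    rw [coeff_psComp, Finset.sum_biUnion]
    · refine Finset.sum_congr rfl fun k _ => ?_
      rw [PowerSeries.coeff_mul, Finset.sum_mul]
      refine Finset.sum_congr rfl fun p hp => ?_
      rw [Finset.HasAntidiagonal.mem_antidiagonal.mp hp]
    · intro k₁ _ k₂ _ hne
      simp only [Function.onFun]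
      rw [Finset.disjoint_left]
      intro p h1 h2
      exact hne ((Finset.HasAntidiagonal.mem_antidiagonal.mp h1).symm.trans (Finset.HasAntidiagonal.mem_antidiagonal.mp h2))
  rw [lhs, rhs1]
  have : ∑ b ∈ Finset.range (n + 1), coeff b B * coeff n (psComp A u * u ^ b)
      = ∑ p ∈ Finset.range (n + 1) ×ˢ Finset.range (n + 1),
          coeff p.1 A * coeff p.2 B * coeff n (u ^ (p.1 + p.2)) := by
    rw [Finset.sum_product, Finset.sum_comm]
    refine Finset.sum_congr rfl fun b _ => ?_
    rw [rhs2 b, Finset.mul_sum]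
    exact Finset.sum_congr rfl fun a _ => by ring
  rw [this]
  apply Finset.sum_subset
  · intro p hp
    simp only [Finset.mem_biUnion, Finset.mem_range, Finset.HasAntidiagonal.mem_antidiagonal] at hp
    obtain ⟨k, hk, hpk⟩ := hp
    simp only [Finset.mem_product, Finset.mem_range]
    omega
  · intro p hp hp2
    have : n < p.1 + p.2 := by
      by_contra hc
      exact hp2 (Finset.mem_biUnion.mpr ⟨p.1 + p.2, Finset.mem_range.mpr (by omega),
        Finset.HasAntidiagonal.mem_antidiagonal.mpr rfl⟩)
    rw [coeff_pow_zero_of_lt hu this, mul_zero]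

lemma psComp_one (u : K⟦X⟧) : psComp 1 u = 1 := by
  ext n
  rw [coeff_psComp]
  rcases Nat.eq_zero_or_pos n with h | h
  · subst h; simp
  · rw [Finset.sum_eq_single 0]
    · simp only [PowerSeries.coeff_one, pow_zero]
      simp [(by omega : n ≠ 0)]
    · intro j _ hj
      simp [PowerSeries.coeff_one, hj]
    · simp

lemma psComp_pow {u : K⟦X⟧} (hu : constantCoeff u = 0) (A : K⟦X⟧) (s : ℕ) :
    psComp (A ^ s) u = (psComp A u) ^ s := by
  induction s with
  | zero => simp [psComp_one]
  | succ s ih => rw [pow_succ, psComp_mul hu, ih, pow_succ]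

lemma psComp_prod {u : K⟦X⟧} (hu : constantCoeff u = 0) (A : ℕ → K⟦X⟧) (r : ℕ) :
    psComp (∏ i ∈ Finset.range r, A i) u = ∏ i ∈ Finset.range r, psComp (A i) u := by
  induction r with
  | zero => simp [psComp_one]
  | succ r ih => rw [Finset.prod_range_succ, psComp_mul hu, ih, Finset.prod_range_succ]

lemma supp_mul (ℓ a b : ℕ) {A B : K⟦X⟧}
    (hA : ∀ x, x % ℓ ≠ a % ℓ → coeff x A = 0)
    (hB : ∀ y, y % ℓ ≠ b % ℓ → coeff y B = 0) :
    ∀ n, n % ℓ ≠ (a + b) % ℓ → coeff n (A * B) = 0 := by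
  intro n hn
  rw [PowerSeries.coeff_mul]
  apply Finset.sum_eq_zero
  intro p hp
  by_cases h1 : p.1 % ℓ = a % ℓ
  · by_cases h2 : p.2 % ℓ = b % ℓ
    · exact absurd (by rw [← Finset.HasAntidiagonal.mem_antidiagonal.mp hp, Nat.add_mod, h1, h2, ← Nat.add_mod]) hn
    · rw [hB _ h2, mul_zero]
  · rw [hA _ h1, zero_mul]

lemma supp_one (ℓ : ℕ) : ∀ n, n % ℓ ≠ 0 % ℓ → coeff n (1 : K⟦X⟧) = 0 := by
  intro n hn
  rw [PowerSeries.coeff_one, if_neg (by rintro rfl; exact hn rfl)]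

lemma supp_pow (ℓ a : ℕ) {A : K⟦X⟧}
    (hA : ∀ x, x % ℓ ≠ a % ℓ → coeff x A = 0) (s : ℕ) :
    ∀ n, n % ℓ ≠ (a * s) % ℓ → coeff n (A ^ s) = 0 := by
  induction s with
  | zero => intro n hn; rw [pow_zero]; exact supp_one ℓ n (by simpa using hn)
  | succ s ih =>
    intro n hn
    rw [pow_succ]
    exact supp_mul ℓ (a * s) a ih hA n (by rwa [← Nat.mul_succ])

lemma supp_prod (ℓ : ℕ) {A : ℕ → K⟦X⟧} (r : ℕ)
    (hA : ∀ i < r, ∀ x, x % ℓ ≠ 1 % ℓ → coeff x (A i) = 0) :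
    ∀ n, n % ℓ ≠ r % ℓ → coeff n (∏ i ∈ Finset.range r, A i) = 0 := by
  induction r with
  | zero => intro n hn; rw [Finset.prod_range_zero]; exact supp_one ℓ n hn
  | succ r ih =>
    intro n hn
    rw [Finset.prod_range_succ]
    exact supp_mul ℓ r 1 (ih fun i hi => hA i (by omega)) (hA r (by omega)) n hn

lemma supp_psComp (ℓ r : ℕ) {E h : K⟦X⟧}
    (hh : ∀ x, x % ℓ ≠ 1 % ℓ → coeff x h = 0)
    (hE : ∀ k, k % ℓ ≠ r % ℓ → coeff k E = 0) :
    ∀ n, n % ℓ ≠ r % ℓ → coeff n (psComp E h) = 0 := by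
  intro n hn
  rw [coeff_psComp]
  apply Finset.sum_eq_zero
  intro k _
  by_cases h1 : k % ℓ = r % ℓ
  · have hpk : ∀ x, x % ℓ ≠ (1 * k) % ℓ → coeff x (h ^ k) = 0 := supp_pow ℓ 1 hh k
    rw [hpk n (by rwa [one_mul, h1]), mul_zero]
  · rw [hE k h1, zero_mul]

end Helpers

/-- The product of two multiple Riordan arrays is a multiple Riordan array. -/
theorem stmt1 {K : Type*} [Field K] [CharZero K] (ℓ : ℕ) (hℓ : 2 ≤ ℓ)
    (g G : K⟦X⟧) (f F : ℕ → K⟦X⟧)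
    (hg : ∀ n, ¬ (ℓ ∣ n) → coeff n g = 0) (hg0 : constantCoeff g ≠ 0)
    (hf : ∀ i < ℓ, ∀ n, n % ℓ ≠ 1 → coeff n (f i) = 0)
    (hf1 : ∀ i < ℓ, coeff 1 (f i) ≠ 0)
    (hG : ∀ n, ¬ (ℓ ∣ n) → coeff n G = 0) (hG0 : constantCoeff G ≠ 0)
    (hF : ∀ i < ℓ, ∀ n, n % ℓ ≠ 1 → coeff n (F i) = 0)
    (hF1 : ∀ i < ℓ, coeff 1 (F i) ≠ 0)
    (h : K⟦X⟧) (hhs : ∀ n, n % ℓ ≠ 1 → coeff n h = 0) (hh1 : coeff 1 h ≠ 0)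
    (hhl : h ^ ℓ = ∏ i ∈ Finset.range ℓ, f i)
    (q : ℕ → K⟦X⟧) (hq : ∀ i < ℓ, f i = q i * h)
    (d e : ℕ → ℕ → K)
    (hd : ∀ n k, d n k = mrEntry ℓ g f n k)
    (he : ∀ n k, e n k = mrEntry ℓ G F n k) :
    (∀ n, ¬ (ℓ ∣ n) → coeff n (g * psComp G h) = 0) ∧
    constantCoeff (g * psComp G h) ≠ 0 ∧
    (∀ i < ℓ, ∀ n, n % ℓ ≠ 1 → coeff n (q i * psComp (F i) h) = 0) ∧
    (∀ i < ℓ, coeff 1 (q i * psComp (F i) h) ≠ 0) ∧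
    (∀ n k, ∑ j ∈ Finset.range (n + 1), d n j * e j k
      = mrEntry ℓ (g * psComp G h) (fun i => q i * psComp (F i) h) n k) := by
  have hℓ0 : 0 < ℓ := by omega
  have h1m : (1 : ℕ) % ℓ = 1 := Nat.mod_eq_of_lt (by omega)
  have hh0 : constantCoeff h = 0 := by
    have := hhs 0 (by rw [Nat.zero_mod]; omega)
    rwa [PowerSeries.coeff_zero_eq_constantCoeff] at this
  have hhs' : ∀ x, x % ℓ ≠ 1 % ℓ → coeff x h = 0 := fun x hx => hhs x (by rwa [h1m] at hx)
  have hhne : h ≠ 0 := fun hc => hh1 (by rw [hc]; simp)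
  have hgsupp : ∀ x, x % ℓ ≠ 0 % ℓ → coeff x g = 0 := by
    intro x hx
    exact hg x (fun hdvd => hx (by rw [Nat.zero_mod, Nat.mod_eq_zero_of_dvd hdvd]))
  have hGsupp : ∀ x, x % ℓ ≠ 0 % ℓ → coeff x G = 0 := by
    intro x hx
    refine hG x (fun hdvd => hx ?_)
    rw [Nat.zero_mod, Nat.mod_eq_zero_of_dvd hdvd]
  have hFsupp : ∀ i < ℓ, ∀ x, x % ℓ ≠ 1 % ℓ → coeff x (F i) = 0 :=
    fun i hi x hx => hF i hi x (by rwa [h1m] at hx)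
  have hfsupp : ∀ i < ℓ, ∀ x, x % ℓ ≠ 1 % ℓ → coeff x (f i) = 0 :=
    fun i hi x hx => hf i hi x (by rwa [h1m] at hx)
  -- support of q i
  have hqsupp : ∀ i, i < ℓ → ∀ n, n % ℓ ≠ 0 → coeff n (q i) = 0 := by
    intro i hi n
    induction n using Nat.strong_induction_on with
    | _ n IH =>
    intro hn
    have key : (0 : K) = coeff (n + 1) (f i) := by
      rw [hf i hi (n + 1) ?_]
      intro hc
      apply hn
      have hd2 := Nat.div_add_mod (n + 1) ℓ
      have hne : n = ℓ * ((n + 1) / ℓ) := by omega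
      rw [hne]; exact Nat.mul_mod_right _ _
    rw [hq i hi, PowerSeries.coeff_mul] at key
    rw [Finset.sum_eq_single_of_mem (n, 1)
      (Finset.HasAntidiagonal.mem_antidiagonal.mpr rfl) ?_] at key
    · exact (mul_eq_zero.mp key.symm).resolve_right hh1
    · intro p hp hpne
      have hps := Finset.HasAntidiagonal.mem_antidiagonal.mp hp
      by_cases h2 : p.2 % ℓ = 1
      · have hp2ne1 : p.2 ≠ 1 := by
          intro hc
          exact hpne (Prod.ext (by omega) hc)
        have hp2pos : p.2 ≠ 0 := by
          intro hc; rw [hc, Nat.zero_mod] at h2; omega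
        have hp1lt : p.1 < n := by omega
        have hp1mod : p.1 % ℓ ≠ 0 := by
          intro hc
          apply hn
          have hmod : (n + 1) % ℓ = 1 := by
            rw [← hps, Nat.add_mod, hc, h2, Nat.zero_add, h1m]
          have hd2 := Nat.div_add_mod (n + 1) ℓ
          have hne : n = ℓ * ((n + 1) / ℓ) := by omega
          rw [hne]; exact Nat.mul_mod_right _ _
        rw [IH p.1 hp1lt hp1mod, zero_mul]
      · rw [hhs p.2 h2, mul_zero]
  have hqsupp' : ∀ i < ℓ, ∀ x, x % ℓ ≠ 0 % ℓ → coeff x (q i) = 0 :=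
    fun i hi x hx => hqsupp i hi x (by rwa [Nat.zero_mod] at hx)
  have hq0 : ∀ i, i < ℓ → constantCoeff (q i) ≠ 0 := by
    intro i hi hc
    apply hf1 i hi
    rw [hq i hi, PowerSeries.coeff_mul, Finset.Nat.sum_antidiagonal_eq_sum_range_succ_mk,
      Finset.sum_range_succ, Finset.sum_range_one]
    simp only [Nat.sub_zero, Nat.sub_self]
    rw [PowerSeries.coeff_zero_eq_constantCoeff, hc, zero_mul, hh0, mul_zero, zero_add]
  -- Part A
  have hcompG : ∀ x, x % ℓ ≠ 0 % ℓ → coeff x (psComp G h) = 0 :=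
    supp_psComp ℓ 0 hhs' hGsupp
  have partA : ∀ n, ¬ (ℓ ∣ n) → coeff n (g * psComp G h) = 0 := by
    intro n hn
    refine supp_mul ℓ 0 0 hgsupp hcompG n ?_
    rw [Nat.zero_add, Nat.zero_mod]
    intro hc; exact hn (Nat.dvd_of_mod_eq_zero hc)
  have partB0 : constantCoeff (g * psComp G h) ≠ 0 := by
    have hcc : constantCoeff (psComp G h) = constantCoeff G := by
      rw [← PowerSeries.coeff_zero_eq_constantCoeff, coeff_psComp, Finset.sum_range_one,
        pow_zero]
      simp
    rw [map_mul, hcc]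
    exact mul_ne_zero hg0 hG0
  -- Part B support
  have hcompF : ∀ i < ℓ, ∀ x, x % ℓ ≠ 1 % ℓ → coeff x (psComp (F i) h) = 0 :=
    fun i hi => supp_psComp ℓ 1 hhs' (hFsupp i hi)
  have partC : ∀ i < ℓ, ∀ n, n % ℓ ≠ 1 → coeff n (q i * psComp (F i) h) = 0 := by
    intro i hi n hn
    refine supp_mul ℓ 0 1 (hqsupp' i hi) (hcompF i hi) n ?_
    rwa [Nat.zero_add, h1m]
  -- Part B coeff 1
  have partD : ∀ i < ℓ, coeff 1 (q i * psComp (F i) h) ≠ 0 := by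
    intro i hi
    have c0 : coeff 0 (psComp (F i) h) = 0 := by
      rw [coeff_psComp]
      simp [hF i hi 0 (by rw [Nat.zero_mod]; omega)]
    have c1 : coeff 1 (psComp (F i) h) = coeff 1 (F i) * coeff 1 h := by
      rw [coeff_psComp, Finset.sum_range_succ, Finset.sum_range_one, pow_zero, pow_one]
      rw [hF i hi 0 (by rw [Nat.zero_mod]; omega), zero_mul, zero_add]
    have e1 : coeff 1 (q i * psComp (F i) h)
        = constantCoeff (q i) * (coeff 1 (F i) * coeff 1 h) := by
      rw [PowerSeries.coeff_mul, Finset.Nat.sum_antidiagonal_eq_sum_range_succ_mk,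
        Finset.sum_range_succ, Finset.sum_range_one]
      simp only [Nat.sub_zero, Nat.sub_self]
      rw [c0, mul_zero, add_zero, PowerSeries.coeff_zero_eq_constantCoeff, c1]
    rw [e1]
    exact mul_ne_zero (hq0 i hi) (mul_ne_zero (hF1 i hi) hh1)
  refine ⟨partA, partB0, partC, partD, ?_⟩
  -- Main product identity
  have hprodq : ∏ i ∈ Finset.range ℓ, q i = 1 := by
    have e : (∏ i ∈ Finset.range ℓ, q i) * h ^ ℓ = 1 * h ^ ℓ := by
      rw [one_mul]
      calc (∏ i ∈ Finset.range ℓ, q i) * h ^ ℓ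
          = ∏ i ∈ Finset.range ℓ, (q i * h) := by
            rw [Finset.prod_mul_distrib, Finset.prod_const, Finset.card_range]
        _ = ∏ i ∈ Finset.range ℓ, f i :=
            Finset.prod_congr rfl fun i hi => (hq i (Finset.mem_range.mp hi)).symm
        _ = h ^ ℓ := hhl.symm
    exact mul_right_cancel₀ (pow_ne_zero ℓ hhne) e
  intro n k
  set m := k % ℓ with hm
  set s := k / ℓ with hs
  have hmlt : m < ℓ := Nat.mod_lt _ hℓ0
  have hmm : m % ℓ = m := Nat.mod_eq_of_lt hmlt
  set Ek : K⟦X⟧ := G * (∏ i ∈ Finset.range m, F i) * (∏ i ∈ Finset.range ℓ, F i) ^ s with hEk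
  have hEksupp : ∀ j, j % ℓ ≠ m → coeff j Ek = 0 := by
    intro j hj
    refine supp_mul ℓ (0 + m) (ℓ * s)
      (supp_mul ℓ 0 m hGsupp (supp_prod ℓ m (fun i hi => hFsupp i (by omega))))
      (supp_pow ℓ ℓ (supp_prod ℓ ℓ (fun i hi => hFsupp i hi)) s) j ?_
    rwa [Nat.zero_add, Nat.add_mul_mod_self_left, hmm]
  set Qm : K⟦X⟧ := ∏ i ∈ Finset.range m, q i with hQm
  -- RHS transformation
  have hprodFm : ∏ i ∈ Finset.range m, (q i * psComp (F i) h)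
      = Qm * psComp (∏ i ∈ Finset.range m, F i) h := by
    rw [Finset.prod_mul_distrib, psComp_prod hh0]
  have hprodFl : ∏ i ∈ Finset.range ℓ, (q i * psComp (F i) h)
      = psComp (∏ i ∈ Finset.range ℓ, F i) h := by
    rw [Finset.prod_mul_distrib, hprodq, one_mul, psComp_prod hh0]
  have hRHS : mrEntry ℓ (g * psComp G h) (fun i => q i * psComp (F i) h) n k
      = coeff n ((g * Qm) * psComp Ek h) := by
    show coeff n _ = _
    rw [hprodFm, hprodFl, ← psComp_pow hh0, hEk, psComp_mul hh0, psComp_mul hh0]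
    ring_nf
    rfl
  rw [hRHS, coeff_mul_psComp hh0]
  refine Finset.sum_congr rfl fun j _ => ?_
  rw [hd n j, he j k]
  show coeff n (g * (∏ i ∈ Finset.range (j % ℓ), f i) * (∏ i ∈ Finset.range ℓ, f i) ^ (j / ℓ))
      * coeff j Ek = coeff j Ek * coeff n ((g * Qm) * h ^ j)
  by_cases hz : coeff j Ek = 0
  · rw [hz, mul_zero, zero_mul]
  · have hjm : j % ℓ = m := by
      by_contra hc; exact hz (hEksupp j hc)
    have hfm : ∏ i ∈ Finset.range m, f i = Qm * h ^ m := by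
      calc ∏ i ∈ Finset.range m, f i
          = ∏ i ∈ Finset.range m, (q i * h) :=
            Finset.prod_congr rfl fun i hi => hq i (by have := Finset.mem_range.mp hi; omega)
        _ = Qm * h ^ m := by
            rw [Finset.prod_mul_distrib, Finset.prod_const, Finset.card_range]
    have hpow : h ^ m * h ^ (ℓ * (j / ℓ)) = h ^ j := by
      rw [← pow_add]
      congr 1
      rw [add_comm, ← hjm]
      exact Nat.div_add_mod j ℓ
    have hser : g * (∏ i ∈ Finset.range (j % ℓ), f i) * (∏ i ∈ Finset.range ℓ, f i) ^ (j / ℓ)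
        = (g * Qm) * h ^ j := by
      rw [hjm, hfm, ← hhl, ← pow_mul]
      calc g * (Qm * h ^ m) * h ^ (ℓ * (j / ℓ))
          = g * Qm * (h ^ m * h ^ (ℓ * (j / ℓ))) := by ring
        _ = g * Qm * h ^ j := by rw [hpow]
    rw [mul_comm, hser]
end

section
/- Let (d_{n,k}) = (g; f_1,…,f_ℓ) be a multiple Riordan array. Then for every n ≥ 0 the n-th row sum satisfies Σ_{k=0}^{n} d_{n,k} = [t^n]( g·(1 + f_1 + f_1 f_2 + ⋯ + f_1 f_2 ⋯ f_{ℓ−1})·(1 − f_1 f_2 ⋯ f_ℓ)^{−1} ), where 1 − f_1⋯f_ℓ is invertible in K[[t]] since its constant term is 1. -/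
open PowerSeries Finset

/-- The generating function of the row sums of a multiple Riordan array. -/
theorem stmt3 {K : Type*} [Field K] [CharZero K] (ℓ : ℕ) (hℓ : 2 ≤ ℓ)
    (g : K⟦X⟧) (f : ℕ → K⟦X⟧)
    (hg : ∀ n, ¬ (ℓ ∣ n) → coeff n g = 0) (hg0 : constantCoeff g ≠ 0)
    (hf : ∀ i < ℓ, ∀ n, n % ℓ ≠ 1 → coeff n (f i) = 0)
    (hf1 : ∀ i < ℓ, coeff 1 (f i) ≠ 0)
    (d : ℕ → ℕ → K) (hd : ∀ n k, d n k = mrEntry ℓ g f n k) :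
    IsUnit (1 - ∏ i ∈ Finset.range ℓ, f i) ∧
    ∀ n, ∑ k ∈ Finset.range (n + 1), d n k
      = coeff n (g * (∑ m ∈ Finset.range ℓ, ∏ i ∈ Finset.range m, f i) *
          (1 - ∏ i ∈ Finset.range ℓ, f i)⁻¹) := by
  have hℓ0 : 0 < ℓ := by omega
  set P : K⟦X⟧ := ∏ i ∈ Finset.range ℓ, f i with hPdef
  have hXd : ∀ i ∈ Finset.range ℓ, (X : K⟦X⟧) ∣ f i := by
    intro i hi
    rw [X_dvd_iff, ← coeff_zero_eq_constantCoeff_apply]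
    exact hf i (Finset.mem_range.mp hi) 0 (by simp)
  have hA : ∀ m, m ≤ ℓ → (X : K⟦X⟧) ^ m ∣ ∏ i ∈ Finset.range m, f i := by
    intro m hm
    calc (X : K⟦X⟧) ^ m = ∏ _i ∈ Finset.range m, (X : K⟦X⟧) := by simp
      _ ∣ _ := Finset.prod_dvd_prod_of_dvd _ _ (fun i hi =>
          hXd i (Finset.mem_range.mpr (lt_of_lt_of_le (Finset.mem_range.mp hi) hm)))
  have hPd : (X : K⟦X⟧) ^ ℓ ∣ P := hA ℓ le_rfl
  have hPc : constantCoeff P = 0 := by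
    rw [← coeff_zero_eq_constantCoeff_apply]
    exact X_pow_dvd_iff.mp hPd 0 hℓ0
  have hc1 : constantCoeff (1 - P) = 1 := by simp [hPc]
  have hunit : IsUnit (1 - P) := by
    rw [isUnit_iff_constantCoeff, hc1]; exact isUnit_one
  refine ⟨hunit, fun n => ?_⟩
  have hcol : ∀ q m, m ≤ ℓ → n < q * ℓ + m →
      coeff n (g * (∏ i ∈ Finset.range m, f i) * P ^ q) = 0 := by
    intro q m hm hn
    have hdvd : (X : K⟦X⟧) ^ (q * ℓ + m) ∣ g * (∏ i ∈ Finset.range m, f i) * P ^ q := by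
      have h2 : (X : K⟦X⟧) ^ (q * ℓ) ∣ P ^ q := by
        have := pow_dvd_pow_of_dvd hPd q
        rwa [← pow_mul, mul_comm ℓ q] at this
      calc (X : K⟦X⟧) ^ (q * ℓ + m) = X ^ (q * ℓ) * X ^ m := pow_add _ _ _
        _ ∣ P ^ q * ∏ i ∈ Finset.range m, f i := mul_dvd_mul h2 (hA m hm)
        _ ∣ _ := ⟨g, by ring⟩
    exact X_pow_dvd_iff.mp hdvd n hn
  set S : K⟦X⟧ := ∑ q ∈ Finset.range (n + 1), P ^ q with hSdef
  have hinv : ∀ h : K⟦X⟧, coeff n (h * (1 - P)⁻¹) = coeff n (h * S) := by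
    intro h
    have hmi : (1 - P) * (1 - P)⁻¹ = 1 :=
      PowerSeries.mul_inv_cancel _ (by rw [hc1]; exact one_ne_zero)
    have hgs : S * (1 - P) = 1 - P ^ (n + 1) := by
      have := geom_sum_mul P (n + 1)
      rw [hSdef]; linear_combination -this
    have key : h * (1 - P)⁻¹ - h * S = (h * (1 - P)⁻¹) * P ^ (n + 1) := by
      calc h * (1 - P)⁻¹ - h * S
          = h * (1 - P)⁻¹ - h * S * ((1 - P) * (1 - P)⁻¹) := by rw [hmi]; ring
        _ = h * (1 - P)⁻¹ - h * (S * (1 - P)) * (1 - P)⁻¹ := by ring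
        _ = (h * (1 - P)⁻¹) * P ^ (n + 1) := by rw [hgs]; ring
    have hz : coeff n ((h * (1 - P)⁻¹) * P ^ (n + 1)) = 0 := by
      have hXP : (X : K⟦X⟧) ∣ P := dvd_trans (dvd_pow_self _ hℓ0.ne') hPd
      have : (X : K⟦X⟧) ^ (n + 1) ∣ (h * (1 - P)⁻¹) * P ^ (n + 1) :=
        Dvd.dvd.mul_left (pow_dvd_pow_of_dvd hXP (n + 1)) _
      exact X_pow_dvd_iff.mp this n (lt_add_one n)
    have h2 := congrArg (coeff n) key
    rw [map_sub, hz] at h2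
    exact sub_eq_zero.mp h2
  rw [hinv]
  have hRHS : coeff n (g * (∑ m ∈ Finset.range ℓ, ∏ i ∈ Finset.range m, f i) * S)
      = ∑ q ∈ Finset.range (n + 1), ∑ m ∈ Finset.range ℓ,
          coeff n (g * (∏ i ∈ Finset.range m, f i) * P ^ q) := by
    have hexp : g * (∑ m ∈ Finset.range ℓ, ∏ i ∈ Finset.range m, f i) * S
        = ∑ q ∈ Finset.range (n + 1), ∑ m ∈ Finset.range ℓ,
            g * (∏ i ∈ Finset.range m, f i) * P ^ q := by
      rw [hSdef, Finset.mul_sum]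
      refine Finset.sum_congr rfl fun q _ => ?_
      rw [Finset.mul_sum, Finset.sum_mul]
    rw [hexp, map_sum]
    simp only [map_sum]
  rw [hRHS]
  have hext : ∑ k ∈ Finset.range (n + 1), d n k = ∑ k ∈ Finset.range (ℓ * (n + 1)), d n k := by
    apply Finset.sum_subset
    · intro k hk
      simp only [Finset.mem_range] at *
      calc k < n + 1 := hk
        _ ≤ ℓ * (n + 1) := Nat.le_mul_of_pos_left _ hℓ0
    · intro k _ hk
      simp only [Finset.mem_range, not_lt] at hk
      rw [hd]
      exact hcol (k / ℓ) (k % ℓ) (Nat.mod_lt _ hℓ0).le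
        (by have := Nat.div_add_mod' k ℓ; omega)
  rw [hext]
  rw [show (∑ k ∈ Finset.range (ℓ * (n + 1)), d n k)
      = ∑ p ∈ Finset.range (n + 1) ×ˢ Finset.range ℓ,
          coeff n (g * (∏ i ∈ Finset.range p.2, f i) * P ^ p.1) from ?_,
    Finset.sum_product]
  apply Finset.sum_nbij' (fun k => ((k / ℓ : ℕ), (k % ℓ : ℕ))) (fun p => p.1 * ℓ + p.2)
  · intro k hk
    simp only [Finset.mem_range, Finset.mem_product] at *
    exact ⟨Nat.div_lt_of_lt_mul hk, Nat.mod_lt _ hℓ0⟩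
  · intro p hp
    simp only [Finset.mem_product, Finset.mem_range] at *
    calc p.1 * ℓ + p.2 < p.1 * ℓ + ℓ := by omega
      _ = (p.1 + 1) * ℓ := by ring
      _ ≤ (n + 1) * ℓ := Nat.mul_le_mul_right _ (by omega)
      _ = ℓ * (n + 1) := Nat.mul_comm _ _
  · intro k _
    exact Nat.div_add_mod' k ℓ
  · intro p hp
    simp only [Finset.mem_product, Finset.mem_range] at hp
    have h1 : (p.1 * ℓ + p.2) / ℓ = p.1 := by
      rw [add_comm, mul_comm, Nat.add_mul_div_left _ _ hℓ0, Nat.div_eq_of_lt hp.2, zero_add]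
    have h2 : (p.1 * ℓ + p.2) % ℓ = p.2 := by
      rw [add_comm, mul_comm, Nat.add_mul_mod_self_left, Nat.mod_eq_of_lt hp.2]
    exact Prod.ext h1 h2
  · intro k _
    rw [hd]; rfl
end

section
/- Let (d_{n,k}) = (g, f) be a Riordan type array. There exists a unique A = Σ_{j≥0} a_j t^j ∈ K[[t]] such that A(t·f) = f (equivalently, A(t) = t / \overline{tf}(t), where \overline{tf} is the compositional inverse of t·f, which exists since t·f has order 1). For this A-sequence (a_j), one has d_{n,k} = Σ_{j=0}^{n} a_j d_{n−j, k+j−1} for all n ≥ 0 and all k ≥ 1. -/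
open PowerSeries Finset

section aux

variable {K : Type*} [Field K]

lemma coeff_psComp_X_mul (A f : K⟦X⟧) (n : ℕ) :
    coeff n (psComp A (X * f)) =
      ∑ j ∈ Finset.range (n + 1), coeff j A * coeff (n - j) (f ^ j) := by
  simp only [psComp, coeff_mk]
  refine Finset.sum_congr rfl fun j hj => ?_
  rw [Finset.mem_range] at hj
  rw [mul_pow]
  congr 1
  have h : n = (n - j) + j := by omega
  have h2 := PowerSeries.coeff_X_pow_mul (f ^ j) j (n - j)
  rw [← h] at h2
  exact h2

noncomputable def aseq (f : K⟦X⟧) : ℕ → K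
  | n => ((coeff n) f - ∑ k ∈ (Finset.range n).attach,
      aseq f k * coeff (n - k) (f ^ (k : ℕ))) / (constantCoeff f) ^ n
  termination_by n => n
  decreasing_by exact Finset.mem_range.mp k.2

lemma aseq_spec (f : K⟦X⟧) (hf0 : constantCoeff f ≠ 0) (n : ℕ) :
    coeff n f = ∑ j ∈ Finset.range (n + 1), aseq f j * coeff (n - j) (f ^ j) := by
  rw [Finset.sum_range_succ]
  have h0 : coeff (n - n) (f ^ n) = (constantCoeff f) ^ n := by
    simp [PowerSeries.coeff_zero_eq_constantCoeff, map_pow]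
  rw [h0, aseq]
  rw [Finset.sum_attach (Finset.range n) (fun k => aseq f k * coeff (n - k) (f ^ k))]
  field_simp
  ring

lemma aseq_unique (f : K⟦X⟧) (hf0 : constantCoeff f ≠ 0) (A B : K⟦X⟧)
    (hA : psComp A (X * f) = f) (hB : psComp B (X * f) = f) : A = B := by
  ext n
  induction n using Nat.strong_induction_on with
  | _ n ih =>
    have hcoef : ∀ C : K⟦X⟧, psComp C (X * f) = f →
        coeff n f = ∑ j ∈ Finset.range (n + 1), coeff j C * coeff (n - j) (f ^ j) := by
      intro C hC
      rw [← coeff_psComp_X_mul, hC]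
    have h := (hcoef A hA).symm.trans (hcoef B hB)
    rw [Finset.sum_range_succ, Finset.sum_range_succ] at h
    have heq : ∑ j ∈ Finset.range n, coeff j A * coeff (n - j) (f ^ j)
        = ∑ j ∈ Finset.range n, coeff j B * coeff (n - j) (f ^ j) := by
      refine Finset.sum_congr rfl fun j hj => ?_
      rw [ih j (Finset.mem_range.mp hj)]
    rw [heq] at h
    have h2 : coeff n A * coeff (n - n) (f ^ n)
        = coeff n B * coeff (n - n) (f ^ n) := by exact add_left_cancel h
    have h0 : coeff (n - n) (f ^ n) = (constantCoeff f) ^ n := by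
      simp [PowerSeries.coeff_zero_eq_constantCoeff, map_pow]
    rw [h0] at h2
    exact mul_right_cancel₀ (pow_ne_zero n hf0) h2

lemma coeff_mul_rec (A f h : K⟦X⟧)
    (hA : ∀ n, coeff n f = ∑ j ∈ Finset.range (n + 1), coeff j A * coeff (n - j) (f ^ j))
    (n : ℕ) :
    coeff n (h * f) = ∑ j ∈ Finset.range (n + 1), coeff j A * coeff (n - j) (h * f ^ j) := by
  rw [PowerSeries.coeff_mul, Finset.Nat.sum_antidiagonal_eq_sum_range_succ_mk]
  have step1 : ∑ m ∈ Finset.range (n + 1), coeff m h * coeff (n - m) f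
      = ∑ m ∈ Finset.range (n + 1), ∑ j ∈ Finset.range (n - m + 1),
          coeff j A * (coeff m h * coeff (n - m - j) (f ^ j)) := by
    refine Finset.sum_congr rfl fun m hm => ?_
    rw [hA (n - m), Finset.mul_sum]
    exact Finset.sum_congr rfl fun j hj => by ring
  rw [step1]
  rw [Finset.sum_comm' (t' := Finset.range (n + 1)) (s' := fun j => Finset.range (n - j + 1))
    (by intro m j; simp only [Finset.mem_range]; omega)]
  refine Finset.sum_congr rfl fun j hj => ?_
  rw [PowerSeries.coeff_mul, Finset.Nat.sum_antidiagonal_eq_sum_range_succ_mk, Finset.mul_sum]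
  refine Finset.sum_congr rfl fun m hm => ?_
  have : n - m - j = n - j - m := by omega
  rw [this]

end aux

/-- Existence and uniqueness of the `A`-sequence of a Riordan type array `(g, f)`
(entries `d_{n,k} = [t^n] g f^k`), and the recurrence it induces. -/
theorem stmt6 {K : Type*} [Field K] [CharZero K]
    (g f : K⟦X⟧) (hg0 : constantCoeff g ≠ 0) (hf0 : constantCoeff f ≠ 0)
    (d : ℕ → ℕ → K) (hd : ∀ n k, d n k = coeff n (g * f ^ k)) :
    (∃! A : K⟦X⟧, psComp A (X * f) = f) ∧
    ∀ A : K⟦X⟧, psComp A (X * f) = f →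
      ∀ n k, 1 ≤ k →
        d n k = ∑ j ∈ Finset.range (n + 1), coeff j A * d (n - j) (k + j - 1) := by
  have hex : psComp (PowerSeries.mk (aseq f)) (X * f) = f := by
    ext n
    rw [coeff_psComp_X_mul]
    simp only [coeff_mk]
    exact (aseq_spec f hf0 n).symm
  constructor
  · exact ⟨PowerSeries.mk (aseq f), hex, fun B hB => aseq_unique f hf0 B _ hB hex⟩
  · intro A hA n k hk
    have hA' : ∀ m, coeff m f = ∑ j ∈ Finset.range (m + 1),
        coeff j A * coeff (m - j) (f ^ j) := by
      intro m
      rw [← coeff_psComp_X_mul, hA]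
    have hfk : g * f ^ k = (g * f ^ (k - 1)) * f := by
      rw [mul_assoc, ← pow_succ]
      congr 2
      omega
    rw [hd n k, hfk, coeff_mul_rec A f (g * f ^ (k - 1)) hA' n]
    refine Finset.sum_congr rfl fun j hj => ?_
    rw [hd (n - j) (k + j - 1)]
    congr 2
    rw [mul_assoc, ← pow_add]
    congr 2
    omega
end

section
/- Let (d_{n,k}) = (g, f) be a Riordan type array and let (z_j)_{j≥0} be its Z-sequence, i.e. Z = Σ_{j≥0} z_j t^j satisfies g·(1 − t·Z(t·f)) = g(0). Then for all n ≥ 1: d_{n,0} = z_0^n d_{0,0} + Σ_{i=1}^{n−1} Σ_{j=1}^{n−i} z_0^{i−1} z_j d_{n−j−i, j}. -/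
open PowerSeries Finset

section aux
variable {K : Type*} [Field K] [CharZero K]

lemma coeff_mul_psComp_s8 (g f : K⟦X⟧) (z : ℕ → K) (m : ℕ) :
    coeff m (g * psComp (PowerSeries.mk z) (X * f)) =
      ∑ k ∈ Finset.range (m + 1), z k * coeff m (g * (X * f) ^ k) := by
  rw [coeff_mul]
  have key : ∀ p ∈ antidiagonal m,
      coeff p.1 g * coeff p.2 (psComp (PowerSeries.mk z) (X * f)) =
      ∑ k ∈ Finset.range (m + 1), z k * (coeff p.1 g * coeff p.2 ((X * f) ^ k)) := by
    intro p hp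
    rw [Finset.HasAntidiagonal.mem_antidiagonal] at hp
    simp only [psComp, coeff_mk, Finset.mul_sum]
    rw [← Finset.sum_subset (Finset.range_subset_range.2 (by omega : p.2 + 1 ≤ m + 1))]
    · exact Finset.sum_congr rfl fun k _ => by ring
    · intro k hk hk2
      simp only [Finset.mem_range, not_lt] at hk2
      have h0 : coeff p.2 ((X * f) ^ k) = 0 := by
        rw [mul_pow, coeff_X_pow_mul', if_neg (by omega)]
      simp [h0]
  rw [Finset.sum_congr rfl key, Finset.sum_comm]
  refine Finset.sum_congr rfl fun k _ => ?_
  rw [coeff_mul, Finset.mul_sum]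

lemma step (g f : K⟦X⟧)
    (d : ℕ → ℕ → K) (hd : ∀ n k, d n k = coeff n (g * f ^ k))
    (z : ℕ → K)
    (hz : g * (1 - X * psComp (PowerSeries.mk z) (X * f)) = C (constantCoeff g))
    (m : ℕ) : d (m + 1) 0 = ∑ k ∈ Finset.range (m + 1), z k * d (m - k) k := by
  have h := congrArg (coeff (m + 1)) hz
  rw [coeff_C, if_neg (Nat.succ_ne_zero m)] at h
  rw [mul_sub, mul_one, map_sub, show g * (X * psComp (PowerSeries.mk z) (X * f))
      = X * (g * psComp (PowerSeries.mk z) (X * f)) by ring,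
    coeff_succ_X_mul, sub_eq_zero] at h
  rw [hd, pow_zero, mul_one, h, coeff_mul_psComp_s8]
  refine Finset.sum_congr rfl fun k hk => ?_
  rw [Finset.mem_range] at hk
  rw [hd, show g * (X * f) ^ k = X ^ k * (g * f ^ k) by ring, coeff_X_pow_mul',
    if_pos (by omega)]

lemma main_claim (g f : K⟦X⟧)
    (d : ℕ → ℕ → K) (hd : ∀ n k, d n k = coeff n (g * f ^ k))
    (z : ℕ → K)
    (hz : g * (1 - X * psComp (PowerSeries.mk z) (X * f)) = C (constantCoeff g))
    (n : ℕ) : d (n + 1) 0 = z 0 ^ (n + 1) * d 0 0 +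
      ∑ i ∈ Finset.range n, z 0 ^ i * (∑ j ∈ Finset.range (n - i),
        z (j + 1) * d (n - i - j - 1) (j + 1)) := by
  induction n with
  | zero => simpa using step g f d hd z hz 0
  | succ n ih =>
    have h := step g f d hd z hz (n + 1)
    rw [Finset.sum_range_succ'] at h
    simp only [Nat.sub_zero] at h
    rw [h, ih, Finset.sum_range_succ' (fun i => z 0 ^ i * (∑ j ∈ Finset.range (n + 1 - i),
        z (j + 1) * d (n + 1 - i - j - 1) (j + 1))) n]
    simp only [Nat.succ_sub_succ, Nat.sub_zero, pow_zero, one_mul]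
    have e1 : ∑ x ∈ Finset.range (n + 1), z (x + 1) * d (n + 1 - x - 1) (x + 1)
        = ∑ x ∈ Finset.range (n + 1), z (x + 1) * d (n - x) (x + 1) :=
      Finset.sum_congr rfl fun x hx => by rw [show n + 1 - x - 1 = n - x by omega]
    have e2 : z 0 * ∑ i ∈ Finset.range n, z 0 ^ i * ∑ j ∈ Finset.range (n - i),
          z (j + 1) * d (n - i - j - 1) (j + 1)
        = ∑ i ∈ Finset.range n, z 0 ^ (i + 1) * ∑ j ∈ Finset.range (n - i),
          z (j + 1) * d (n - i - j - 1) (j + 1) := by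
      rw [Finset.mul_sum]; exact Finset.sum_congr rfl fun i _ => by ring
    rw [e1, mul_add, e2]
    ring

lemma icc_shift {M : Type*} [AddCommMonoid M] (F : ℕ → M) (n : ℕ) :
    ∑ i ∈ Finset.Icc 1 n, F i = ∑ i ∈ Finset.range n, F (i + 1) := by
  induction n with
  | zero => simp
  | succ n ih =>
    rw [Finset.sum_Icc_succ_top (by omega), ih, Finset.sum_range_succ]

end aux

/-- Iterated form of the `Z`-sequence recurrence for a Riordan type array `(g, f)`. -/
theorem stmt8 {K : Type*} [Field K] [CharZero K]
    (g f : K⟦X⟧) (hg0 : constantCoeff g ≠ 0) (hf0 : constantCoeff f ≠ 0)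
    (d : ℕ → ℕ → K) (hd : ∀ n k, d n k = coeff n (g * f ^ k))
    (z : ℕ → K)
    (hz : g * (1 - X * psComp (PowerSeries.mk z) (X * f)) = C (constantCoeff g)) :
    ∀ n, 1 ≤ n →
      d n 0 = z 0 ^ n * d 0 0 +
        ∑ i ∈ Finset.Icc 1 (n - 1), ∑ j ∈ Finset.Icc 1 (n - i),
          z 0 ^ (i - 1) * z j * d (n - j - i) j := by
  intro n hn
  obtain ⟨m, rfl⟩ := Nat.exists_eq_add_of_le hn
  rw [add_comm 1 m]
  rw [main_claim g f d hd z hz m, Nat.add_sub_cancel]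
  congr 1
  rw [icc_shift]
  refine Finset.sum_congr rfl fun i hi => ?_
  rw [Finset.mem_range] at hi
  rw [icc_shift, show m + 1 - (i + 1) = m - i by omega, Finset.mul_sum]
  refine Finset.sum_congr rfl fun j hj => ?_
  rw [Finset.mem_range] at hj
  rw [Nat.add_sub_cancel, show m + 1 - (j + 1) - (i + 1) = m - i - j - 1 by omega]
  ring
end

section
/- Let (d_{n,k}) = (g; f_1,…,f_ℓ) be a multiple Riordan array and h an ℓ-th root of f_1⋯f_ℓ. For each m ∈ {0, 1, …, ℓ−1} there exists a unique Z_m = Σ_{j≥0} z_{m,j} t^{ℓj} ∈ K[[t]] supported on exponents divisible by ℓ such that g·f_1⋯f_m·(1 − t^ℓ·Z_m(h)) = g_0 f_{1,0}⋯f_{m,0}·t^m (empty products equal to 1, so for m = 0 the condition reads g·(1 − t^ℓ·Z_0(h)) = g_0). For these Z_m-sequences, one has d_{n,m} = Σ_{j=0}^{n} z_{m,j} d_{n−ℓ, m+jℓ} for all n ≥ ℓ and each m ∈ {0,…,ℓ−1} (terms whose column index exceeds the row index are zero). -/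
open PowerSeries Finset

section Aux
variable {K : Type*} [CommRing K]

lemma aux_coeff_pow_eq_zero {h : K⟦X⟧} (hh : constantCoeff h = 0) {s k : ℕ} (hs : s < k) :
    coeff s (h ^ k) = 0 :=
  X_pow_dvd_iff.mp (pow_dvd_pow_of_dvd (X_dvd_iff.mpr hh) k) s hs

lemma aux_mul_vanish {φ ψ : K⟦X⟧} {a b : ℕ} (hφ : ∀ i < a, coeff i φ = 0)
    (hψ : ∀ i < b, coeff i ψ = 0) : ∀ i < a + b, coeff i (φ * ψ) = 0 :=
  X_pow_dvd_iff.mp (by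
    rw [pow_add]
    exact mul_dvd_mul (X_pow_dvd_iff.mpr hφ) (X_pow_dvd_iff.mpr hψ))

lemma aux_lead_mul {φ ψ : K⟦X⟧} {a b : ℕ} (hφ : ∀ i < a, coeff i φ = 0)
    (hψ : ∀ i < b, coeff i ψ = 0) :
    coeff (a + b) (φ * ψ) = coeff a φ * coeff b ψ := by
  rw [coeff_mul]
  refine Finset.sum_eq_single (a, b) ?_ ?_
  · rintro ⟨i, j⟩ hmem hne
    rw [Finset.HasAntidiagonal.mem_antidiagonal] at hmem
    simp only at hmem ⊢
    rcases lt_or_ge i a with hi | hi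
    · rw [hφ i hi, zero_mul]
    · have hij : j < b ∨ (i = a ∧ j = b) := by omega
      rcases hij with hj | ⟨rfl, rfl⟩
      · rw [hψ j hj, mul_zero]
      · exact absurd rfl hne
  · intro habs
    simp at habs

lemma aux_lead_pow {h : K⟦X⟧} (hh : constantCoeff h = 0) (k : ℕ) :
    coeff k (h ^ k) = (coeff 1 h) ^ k := by
  induction k with
  | zero => simp
  | succ k ih =>
    rw [pow_succ, pow_succ, ← ih]
    exact aux_lead_mul (fun i hi => aux_coeff_pow_eq_zero hh hi)
      (fun i hi => by interval_cases i; simpa using hh)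

lemma aux_supp_mul {ℓ a b : ℕ} {φ ψ : K⟦X⟧} (hφ : ∀ n, n % ℓ ≠ a % ℓ → coeff n φ = 0)
    (hψ : ∀ n, n % ℓ ≠ b % ℓ → coeff n ψ = 0) :
    ∀ n, n % ℓ ≠ (a + b) % ℓ → coeff n (φ * ψ) = 0 := by
  intro n hn
  rw [coeff_mul]
  apply Finset.sum_eq_zero
  rintro ⟨i, j⟩ hmem
  rw [Finset.HasAntidiagonal.mem_antidiagonal] at hmem
  simp only
  by_cases hi : i % ℓ = a % ℓ
  · by_cases hj : j % ℓ = b % ℓ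
    · exfalso
      apply hn
      rw [← hmem, Nat.add_mod, hi, hj, ← Nat.add_mod]
    · rw [hψ j hj, mul_zero]
  · rw [hφ i hi, zero_mul]

lemma aux_supp_pow {ℓ : ℕ} {h : K⟦X⟧} (hh : ∀ n, n % ℓ ≠ 1 % ℓ → coeff n h = 0) :
    ∀ k n, n % ℓ ≠ k % ℓ → coeff n (h ^ k) = 0 := by
  intro k
  induction k with
  | zero =>
    intro n hn
    have hn0 : n ≠ 0 := by rintro rfl; exact hn rfl
    rw [pow_zero, coeff_one, if_neg hn0]
  | succ k ih =>
    intro n hn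
    rw [pow_succ]
    exact aux_supp_mul ih hh n hn

lemma aux_coeff_psComp {ℓ : ℕ} (hℓ : 0 < ℓ) {Z h : K⟦X⟧}
    (hZ : ∀ k, ¬ ℓ ∣ k → coeff k Z = 0) (hh0 : constantCoeff h = 0)
    {s M : ℕ} (hs : s < ℓ * (M + 1)) :
    coeff s (psComp Z h)
      = ∑ j ∈ Finset.range (M + 1), coeff (ℓ * j) Z * coeff s (h ^ (ℓ * j)) := by
  have hset : coeff s (psComp Z h)
      = ∑ k ∈ Finset.range (ℓ * (M + 1)), coeff k Z * coeff s (h ^ k) := by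
    rw [psComp, coeff_mk]
    apply Finset.sum_subset
    · intro k hk
      simp only [Finset.mem_range] at hk ⊢
      omega
    · intro k hk hk2
      simp only [Finset.mem_range] at hk hk2
      rw [aux_coeff_pow_eq_zero hh0 (by omega), mul_zero]
  have himg := Finset.sum_image (s := Finset.range (M + 1)) (g := fun j => ℓ * j)
    (f := fun k => coeff k Z * coeff s (h ^ k))
    (fun x _ y _ hxy => Nat.eq_of_mul_eq_mul_left hℓ hxy)
  rw [hset, ← himg]
  apply (Finset.sum_subset ?_ ?_).symm
  · intro k hk
    simp only [Finset.mem_image, Finset.mem_range] at hk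
    obtain ⟨j, hj, rfl⟩ := hk
    simp only [Finset.mem_range]
    exact (Nat.mul_lt_mul_left hℓ).mpr hj
  · intro k hk hk2
    simp only [Finset.mem_range] at hk
    have hnd : ¬ ℓ ∣ k := by
      rintro ⟨j, rfl⟩
      apply hk2
      simp only [Finset.mem_image, Finset.mem_range]
      exact ⟨j, lt_of_mul_lt_mul_left hk (Nat.zero_le _), rfl⟩
    rw [hZ k hnd, zero_mul]

lemma aux_comp_mul {ℓ : ℕ} (hℓ : 0 < ℓ) {G Z h : K⟦X⟧}
    (hZ : ∀ k, ¬ ℓ ∣ k → coeff k Z = 0) (hh0 : constantCoeff h = 0)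
    {N M : ℕ} (hs : N < ℓ * (M + 1)) :
    coeff N (G * psComp Z h)
      = ∑ j ∈ Finset.range (M + 1), coeff (ℓ * j) Z * coeff N (G * h ^ (ℓ * j)) := by
  rw [coeff_mul]
  have key : ∀ p ∈ Finset.HasAntidiagonal.antidiagonal N, coeff p.1 G * coeff p.2 (psComp Z h)
      = ∑ j ∈ Finset.range (M + 1),
          coeff (ℓ * j) Z * (coeff p.1 G * coeff p.2 (h ^ (ℓ * j))) := by
    intro p hp
    rw [Finset.HasAntidiagonal.mem_antidiagonal] at hp
    rw [aux_coeff_psComp hℓ hZ hh0 (s := p.2) (M := M) (by omega), Finset.mul_sum]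
    exact Finset.sum_congr rfl fun j _ => by ring
  rw [Finset.sum_congr rfl key, Finset.sum_comm]
  exact Finset.sum_congr rfl fun j _ => by rw [coeff_mul, Finset.mul_sum]

end Aux

noncomputable def zRec {K : Type*} [Field K] (w : ℕ → ℕ → K) (b dg : ℕ → K) : ℕ → K
  | n => (b n - ∑ j ∈ (Finset.range n).attach, w n j.1 * zRec w b dg j.1) / dg n
  decreasing_by exact Finset.mem_range.mp j.2

lemma zRec_spec {K : Type*} [Field K] (w : ℕ → ℕ → K) (b dg : ℕ → K) (n : ℕ)
    (hdg : dg n ≠ 0) :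
    dg n * zRec w b dg n + ∑ j ∈ Finset.range n, w n j * zRec w b dg j = b n := by
  rw [zRec, mul_div_cancel₀ _ hdg, ← Finset.sum_attach (Finset.range n)
    (fun j => w n j * zRec w b dg j)]
  ring

/-- Existence and uniqueness of the `Z_m`-sequences of a multiple Riordan array, and the
recurrences they induce. -/
theorem stmt11 {K : Type*} [Field K] [CharZero K] (ℓ : ℕ) (hℓ : 2 ≤ ℓ)
    (g : K⟦X⟧) (f : ℕ → K⟦X⟧)
    (hg : ∀ n, ¬ (ℓ ∣ n) → coeff n g = 0) (hg0 : constantCoeff g ≠ 0)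
    (hf : ∀ i < ℓ, ∀ n, n % ℓ ≠ 1 → coeff n (f i) = 0)
    (hf1 : ∀ i < ℓ, coeff 1 (f i) ≠ 0)
    (h : K⟦X⟧) (hhs : ∀ n, n % ℓ ≠ 1 → coeff n h = 0) (hh1 : coeff 1 h ≠ 0)
    (hhl : h ^ ℓ = ∏ i ∈ Finset.range ℓ, f i)
    (d : ℕ → ℕ → K) (hd : ∀ n k, d n k = mrEntry ℓ g f n k) :
    ∀ m < ℓ,
      (∃! Z : K⟦X⟧, (∀ n, ¬ (ℓ ∣ n) → coeff n Z = 0) ∧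
        g * (∏ i ∈ Finset.range m, f i) * (1 - X ^ ℓ * psComp Z h)
          = C (constantCoeff g * ∏ i ∈ Finset.range m, coeff 1 (f i)) * X ^ m) ∧
      ∀ Z : K⟦X⟧, (∀ n, ¬ (ℓ ∣ n) → coeff n Z = 0) →
        g * (∏ i ∈ Finset.range m, f i) * (1 - X ^ ℓ * psComp Z h)
          = C (constantCoeff g * ∏ i ∈ Finset.range m, coeff 1 (f i)) * X ^ m →
        ∀ n, ℓ ≤ n →
          d n m = ∑ j ∈ Finset.range (n + 1), coeff (ℓ * j) Z * d (n - ℓ) (m + j * ℓ) := by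
  intro m hm
  have hℓ0 : 0 < ℓ := by omega
  set G : K⟦X⟧ := g * ∏ i ∈ Finset.range m, f i with hGdef
  set c : K := constantCoeff g * ∏ i ∈ Finset.range m, coeff 1 (f i) with hcdef
  have h1ℓ : 1 % ℓ = 1 := Nat.mod_eq_of_lt (by omega)
  have hh0 : constantCoeff h = 0 := by
    have := hhs 0 (by rw [Nat.zero_mod]; omega)
    simpa using this
  have hhs' : ∀ n, n % ℓ ≠ 1 % ℓ → coeff n h = 0 := fun n hn =>
    hhs n (by rwa [h1ℓ] at hn)
  -- support of partial products
  have hGsupp' : ∀ m' ≤ m, ∀ n, n % ℓ ≠ m' % ℓ →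
      coeff n (g * ∏ i ∈ Finset.range m', f i) = 0 := by
    intro m'
    induction m' with
    | zero =>
      intro _ n hn
      simp only [Finset.range_zero, Finset.prod_empty, mul_one]
      refine hg n fun hdvd => hn ?_
      obtain ⟨t, rfl⟩ := hdvd
      rw [Nat.zero_mod, Nat.mul_mod_right]
    | succ k ih =>
      intro hk n hn
      rw [Finset.prod_range_succ, ← mul_assoc]
      exact aux_supp_mul (ih (by omega)) (fun n' hn' => hf k (by omega) n'
        (by rwa [h1ℓ] at hn')) n hn
  have hGsupp : ∀ n, n % ℓ ≠ m → coeff n G = 0 := fun n hn =>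
    hGsupp' m le_rfl n (by rwa [Nat.mod_eq_of_lt hm])
  have hGlow : ∀ i < m, coeff i G = 0 := fun i hi =>
    hGsupp i (by rw [Nat.mod_eq_of_lt (by omega)]; omega)
  have hlead' : ∀ m' ≤ m, coeff m' (g * ∏ i ∈ Finset.range m', f i)
      = constantCoeff g * ∏ i ∈ Finset.range m', coeff 1 (f i) := by
    intro m'
    induction m' with
    | zero => intro _; simp
    | succ k ih =>
      intro hk
      rw [Finset.prod_range_succ, Finset.prod_range_succ, ← mul_assoc]
      have hlow : ∀ i < k, coeff i (g * ∏ i ∈ Finset.range k, f i) = 0 := fun i hi =>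
        hGsupp' k (by omega) i
          (by rw [Nat.mod_eq_of_lt (by omega), Nat.mod_eq_of_lt (by omega)]; omega)
      have hflow : ∀ i < 1, coeff i (f k) = 0 := by
        intro i hi
        interval_cases i
        exact hf k (by omega) 0 (by rw [Nat.zero_mod]; omega)
      calc coeff (k + 1) ((g * ∏ i ∈ Finset.range k, f i) * f k)
          = coeff k (g * ∏ i ∈ Finset.range k, f i) * coeff 1 (f k) :=
            aux_lead_mul hlow hflow
        _ = _ := by rw [ih (by omega)]; ring
  have hGm : coeff m G = c := hlead' m le_rfl
  have hc : c ≠ 0 := mul_ne_zero hg0 (Finset.prod_ne_zero_iff.mpr fun i hi =>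
    hf1 i (lt_trans (Finset.mem_range.mp hi) hm))
  have hpowlow : ∀ j : ℕ, ∀ i < ℓ * j, coeff i (h ^ (ℓ * j)) = 0 :=
    fun j i hi => aux_coeff_pow_eq_zero hh0 hi
  have hpowsupp : ∀ (j n : ℕ), n % ℓ ≠ 0 → coeff n (h ^ (ℓ * j)) = 0 := by
    intro j n hn
    exact aux_supp_pow hhs' (ℓ * j) n (by rw [Nat.mul_mod_right]; exact hn)
  have hGFlow : ∀ j : ℕ, ∀ i < m + ℓ * j, coeff i (G * h ^ (ℓ * j)) = 0 :=
    fun j => aux_mul_vanish hGlow (hpowlow j)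
  have hGFlead : ∀ j : ℕ, coeff (m + ℓ * j) (G * h ^ (ℓ * j))
      = c * (coeff 1 h) ^ (ℓ * j) := by
    intro j
    rw [aux_lead_mul hGlow (hpowlow j), hGm, aux_lead_pow hh0]
  -- support of G * psComp Z h for Z supported on multiples of ℓ
  have hPsupp : ∀ Z : K⟦X⟧, (∀ k, ¬ ℓ ∣ k → coeff k Z = 0) →
      ∀ n, n % ℓ ≠ 0 → coeff n (psComp Z h) = 0 := by
    intro Z hZ n hn
    rw [aux_coeff_psComp hℓ0 hZ hh0 (s := n) (M := n)
      (lt_of_lt_of_le (Nat.lt_succ_self n) (Nat.le_mul_of_pos_left _ hℓ0))]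
    exact Finset.sum_eq_zero fun j _ => by rw [hpowsupp j n hn, mul_zero]
  have hGPsupp : ∀ Z : K⟦X⟧, (∀ k, ¬ ℓ ∣ k → coeff k Z = 0) →
      ∀ n, n % ℓ ≠ m → coeff n (G * psComp Z h) = 0 := by
    intro Z hZ
    have := aux_supp_mul (ℓ := ℓ) (a := m) (b := 0)
      (fun n hn => hGsupp n (by rwa [Nat.mod_eq_of_lt hm] at hn))
      (fun n hn => hPsupp Z hZ n (by simpa using hn))
    intro n hn
    exact this n (by rw [Nat.add_zero, Nat.mod_eq_of_lt hm]; exact hn)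
  -- the recurrence, for any solution Z
  have recur : ∀ Z : K⟦X⟧, (∀ n, ¬ (ℓ ∣ n) → coeff n Z = 0) →
      G * (1 - X ^ ℓ * psComp Z h) = C c * X ^ m →
      ∀ n, ℓ ≤ n →
        d n m = ∑ j ∈ Finset.range (n + 1), coeff (ℓ * j) Z * d (n - ℓ) (m + j * ℓ) := by
    intro Z hZsupp hZeq n hn
    have eq2 : G = C c * X ^ m + X ^ ℓ * (G * psComp Z h) := by linear_combination hZeq
    have h1 : coeff n G = coeff (n - ℓ) (G * psComp Z h) := by
      conv_lhs => rw [eq2]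
      rw [map_add, coeff_C_mul, coeff_X_pow, if_neg (by omega : ¬ n = m), mul_zero, zero_add,
        coeff_X_pow_mul', if_pos hn]
    have h2 := aux_comp_mul hℓ0 (G := G) hZsupp hh0 (N := n - ℓ) (M := n)
      (lt_of_le_of_lt (Nat.sub_le n ℓ)
        (lt_of_lt_of_le (Nat.lt_succ_self n) (Nat.le_mul_of_pos_left _ hℓ0)))
    have h3 : ∀ j : ℕ, d (n - ℓ) (m + j * ℓ) = coeff (n - ℓ) (G * h ^ (ℓ * j)) := by
      intro j
      rw [hd, mrEntry]
      have e1 : (m + j * ℓ) % ℓ = m := by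
        rw [Nat.add_mul_mod_self_right, Nat.mod_eq_of_lt hm]
      have e2 : (m + j * ℓ) / ℓ = j := by
        rw [Nat.add_mul_div_right _ _ hℓ0, Nat.div_eq_of_lt hm, Nat.zero_add]
      rw [e1, e2, ← hhl, ← pow_mul, ← hGdef]
    have h4 : d n m = coeff n G := by
      rw [hd, mrEntry, Nat.mod_eq_of_lt hm, Nat.div_eq_of_lt hm, pow_zero, mul_one, ← hGdef]
    rw [h4, h1, h2]
    exact Finset.sum_congr rfl fun j _ => by rw [h3 j]
  -- construction of the canonical solution
  set w : ℕ → ℕ → K := fun q j => coeff (m + ℓ * q) (G * h ^ (ℓ * j)) with hwdef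
  set b : ℕ → K := fun q => coeff (m + ℓ * (q + 1)) G with hbdef
  set dg : ℕ → K := fun q => c * (coeff 1 h) ^ (ℓ * q) with hdgdef
  have hdgne : ∀ q, dg q ≠ 0 := fun q => mul_ne_zero hc (pow_ne_zero _ hh1)
  have hspec : ∀ q, dg q * zRec w b dg q + ∑ j ∈ Finset.range q, w q j * zRec w b dg j = b q :=
    fun q => zRec_spec w b dg q (hdgne q)
  set Z₀ : K⟦X⟧ := PowerSeries.mk fun k => if ℓ ∣ k then zRec w b dg (k / ℓ) else 0 with hZ₀def
  have hZ₀supp : ∀ k, ¬ ℓ ∣ k → coeff k Z₀ = 0 := fun k hk => by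
    rw [hZ₀def, coeff_mk, if_neg hk]
  have hZ₀j : ∀ j, coeff (ℓ * j) Z₀ = zRec w b dg j := fun j => by
    rw [hZ₀def, coeff_mk, if_pos ⟨j, rfl⟩, Nat.mul_div_cancel_left j hℓ0]
  have hZ₀eq : G * (1 - X ^ ℓ * psComp Z₀ h) = C c * X ^ m := by
    have eq2 : G - X ^ ℓ * (G * psComp Z₀ h) = C c * X ^ m := by
      ext n
      rw [map_sub, coeff_X_pow_mul', coeff_C_mul, coeff_X_pow]
      by_cases hmod : n % ℓ = m
      · have hdm := Nat.div_add_mod n ℓ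
        rcases Nat.eq_zero_or_pos (n / ℓ) with hq0 | hqpos
        · have hz0 : ℓ * (n / ℓ) = 0 := by rw [hq0, Nat.mul_zero]
          have hnm : n = m := by omega
          rw [if_neg (show ¬ ℓ ≤ n by omega), if_pos hnm, mul_one, sub_zero, hnm, hGm]
        · obtain ⟨q', hq'⟩ : ∃ q', n / ℓ = q' + 1 := ⟨n / ℓ - 1, by omega⟩
          have hℓq : ℓ * (n / ℓ) = ℓ * q' + ℓ := by rw [hq', Nat.mul_add, Nat.mul_one]
          have hnval : n = m + ℓ * q' + ℓ := by omega
          rw [if_neg (by omega : ¬ n = m), mul_zero, if_pos (by omega : ℓ ≤ n)]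
          have hnl : n - ℓ = m + ℓ * q' := by omega
          rw [hnl, aux_comp_mul hℓ0 hZ₀supp hh0 (M := q' + 1)
            (by nlinarith [hℓ0, hm] : m + ℓ * q' < ℓ * (q' + 1 + 1))]
          rw [Finset.sum_range_succ, hZ₀j (q' + 1),
            hGFlow (q' + 1) (m + ℓ * q') (by nlinarith : m + ℓ * q' < m + ℓ * (q' + 1)),
            mul_zero, add_zero]
          have hbn : coeff n G = b q' := by
            have hx : n = m + ℓ * (q' + 1) := by rw [Nat.mul_add, Nat.mul_one]; omega
            rw [hx, hbdef]
          rw [hbn, ← hspec q', Finset.sum_range_succ, hZ₀j q']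
          have hdiag : coeff (m + ℓ * q') (G * h ^ (ℓ * q')) = dg q' := hGFlead q'
          rw [hdiag]
          have hterms : ∀ j ∈ Finset.range q', coeff (ℓ * j) Z₀
              * coeff (m + ℓ * q') (G * h ^ (ℓ * j))
              = w q' j * zRec w b dg j := by
            intro j _
            simp only [hwdef]
            rw [hZ₀j j]
            ring
          rw [Finset.sum_congr rfl hterms]
          ring
      · have hnem : ¬ n = m := fun hnm => hmod (by rw [hnm, Nat.mod_eq_of_lt hm])
        have hz : (if ℓ ≤ n then coeff (n - ℓ) (G * psComp Z₀ h) else 0) = 0 := by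
          split_ifs with hln
          · refine hGPsupp Z₀ hZ₀supp (n - ℓ) ?_
            have he : (n - ℓ) % ℓ = n % ℓ := by
              conv_rhs => rw [← Nat.sub_add_cancel hln]
              rw [Nat.add_mod_right]
            rw [he]; exact hmod
          · rfl
        rw [hGsupp n hmod, if_neg hnem, mul_zero, hz, sub_zero]
    linear_combination eq2
  refine ⟨⟨Z₀, ⟨hZ₀supp, hZ₀eq⟩, ?_⟩, recur⟩
  rintro Z' ⟨hZ'supp, hZ'eq⟩
  have hPP : psComp Z' h = psComp Z₀ h := by
    have hzero : G * (X ^ ℓ * (psComp Z' h - psComp Z₀ h)) = 0 := by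
      linear_combination hZ₀eq - hZ'eq
    have hGne : G ≠ 0 := fun hG0 => hc (by rw [← hGm, hG0, map_zero])
    have hXne : (X : K⟦X⟧) ^ ℓ ≠ 0 := pow_ne_zero _ X_ne_zero
    have h5 := (mul_eq_zero.mp hzero).resolve_left hGne
    have h6 := (mul_eq_zero.mp h5).resolve_left hXne
    exact sub_eq_zero.mp h6
  have key : ∀ j, coeff (ℓ * j) Z' = coeff (ℓ * j) Z₀ := by
    intro j
    induction j using Nat.strong_induction_on with
    | _ j ih =>
      have hlt : ℓ * j < ℓ * (j + 1) := by nlinarith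
      have h1 := aux_coeff_psComp hℓ0 hZ'supp hh0 (s := ℓ * j) (M := j) hlt
      have h2 := aux_coeff_psComp hℓ0 hZ₀supp hh0 (s := ℓ * j) (M := j) hlt
      rw [hPP, h2] at h1
      rw [Finset.sum_range_succ, Finset.sum_range_succ] at h1
      have hsum : ∀ j' ∈ Finset.range j,
          coeff (ℓ * j') Z' * coeff (ℓ * j) (h ^ (ℓ * j'))
          = coeff (ℓ * j') Z₀ * coeff (ℓ * j) (h ^ (ℓ * j')) :=
        fun j' hj' => by rw [ih j' (Finset.mem_range.mp hj')]
      rw [Finset.sum_congr rfl hsum] at h1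
      have h7 := add_left_cancel h1
      have hdne : coeff (ℓ * j) (h ^ (ℓ * j)) ≠ 0 := by
        rw [aux_lead_pow hh0]
        exact pow_ne_zero _ hh1
      exact (mul_right_cancel₀ hdne h7).symm
  apply PowerSeries.ext
  intro k
  by_cases hdk : ℓ ∣ k
  · obtain ⟨j, rfl⟩ := hdk
    exact key j
  · rw [hZ'supp k hdk, hZ₀supp k hdk]
end

section
/- Let (d_{n,k}) = (g; f_1,…,f_ℓ) be a multiple Riordan type array with h as in the context (h^ℓ = f_1⋯f_ℓ). There exists a unique A = Σ_{j≥0} a_j t^{ℓj} ∈ K[[t]] supported on exponents divisible by ℓ such that A(t·h) = h^ℓ. For this A-sequence (a_j), one has d_{n,k} = Σ_{j≥0, jℓ≤n} a_j d_{n−jℓ, k+ℓ(j−1)} for all n ≥ 0 and all k ≥ ℓ. -/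
open PowerSeries Finset

section Aux

variable {K : Type*} [Field K]

lemma coeff_Xh_pow (h : K⟦X⟧) (n k : ℕ) :
    coeff n ((X * h) ^ k) = if k ≤ n then coeff (n - k) (h ^ k) else 0 := by
  rw [mul_pow, mul_comm, coeff_mul_X_pow']

lemma supp_mul_s12 {ℓ : ℕ} {a b : K⟦X⟧} (ha : ∀ n, ¬ ℓ ∣ n → coeff n a = 0)
    (hb : ∀ n, ¬ ℓ ∣ n → coeff n b = 0) :
    ∀ n, ¬ ℓ ∣ n → coeff n (a * b) = 0 := by
  intro n hn
  rw [coeff_mul]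
  apply Finset.sum_eq_zero
  intro p hp
  rw [Finset.HasAntidiagonal.mem_antidiagonal] at hp
  by_cases h1 : ℓ ∣ p.1
  · have h2 : ¬ ℓ ∣ p.2 := fun h2 => hn (hp ▸ dvd_add h1 h2)
    rw [hb _ h2, mul_zero]
  · rw [ha _ h1, zero_mul]

lemma supp_pow_s12 {ℓ : ℕ} {a : K⟦X⟧} (ha : ∀ n, ¬ ℓ ∣ n → coeff n a = 0) (k : ℕ) :
    ∀ n, ¬ ℓ ∣ n → coeff n (a ^ k) = 0 := by
  induction k with
  | zero =>
    intro n hn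
    have hn0 : n ≠ 0 := by rintro rfl; exact hn (dvd_zero ℓ)
    simp [coeff_one, hn0]
  | succ k ih =>
    rw [pow_succ]
    exact supp_mul_s12 ih ha

/-- The `A`-sequence coefficients, defined by solving the triangular system
`∑_{k ≤ n} a_k [t^n](Xh)^k = [t^n] h^ℓ`. -/
noncomputable def ACoeff (ℓ : ℕ) (h : K⟦X⟧) : ℕ → K
  | n => ((constantCoeff h) ^ n)⁻¹ *
      (coeff n (h ^ ℓ) - ∑ k ∈ (Finset.range n).attach,
        ACoeff ℓ h k * coeff n ((X * h) ^ (k : ℕ)))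
  decreasing_by exact Finset.mem_range.mp k.2

lemma ACoeff_def (ℓ : ℕ) (h : K⟦X⟧) (n : ℕ) :
    ACoeff ℓ h n = ((constantCoeff h) ^ n)⁻¹ *
      (coeff n (h ^ ℓ) - ∑ k ∈ Finset.range n,
        ACoeff ℓ h k * coeff n ((X * h) ^ k)) := by
  rw [ACoeff, ← Finset.sum_attach (Finset.range n)
    (fun k => ACoeff ℓ h k * coeff n ((X * h) ^ k))]

lemma coeff_Xh_pow_self (h : K⟦X⟧) (n : ℕ) :
    coeff n ((X * h) ^ n) = (constantCoeff h) ^ n := by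
  rw [coeff_Xh_pow, if_pos le_rfl, Nat.sub_self, coeff_zero_eq_constantCoeff, map_pow]

lemma ACoeff_spec (ℓ : ℕ) {h : K⟦X⟧} (hh0 : constantCoeff h ≠ 0) (n : ℕ) :
    ∑ k ∈ Finset.range (n + 1), ACoeff ℓ h k * coeff n ((X * h) ^ k)
      = coeff n (h ^ ℓ) := by
  rw [Finset.sum_range_succ, coeff_Xh_pow_self, ACoeff_def]
  have h0 : (constantCoeff h) ^ n ≠ 0 := pow_ne_zero n hh0
  field_simp
  ring

lemma ACoeff_supp (ℓ : ℕ) {h : K⟦X⟧} (hhs : ∀ n, ¬ ℓ ∣ n → coeff n h = 0) :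
    ∀ n, ¬ ℓ ∣ n → ACoeff ℓ h n = 0 := by
  intro n
  induction n using Nat.strong_induction_on with
  | _ n ih =>
    intro hn
    rw [ACoeff_def]
    have hb : coeff n (h ^ ℓ) = 0 := supp_pow_s12 hhs ℓ n hn
    have hsum : ∑ k ∈ Finset.range n, ACoeff ℓ h k * coeff n ((X * h) ^ k) = 0 := by
      apply Finset.sum_eq_zero
      intro k hk
      by_cases hdk : ℓ ∣ k
      · have hc : coeff n ((X * h) ^ k) = 0 := by
          rw [coeff_Xh_pow]
          split
          · rename_i hkn
            refine supp_pow_s12 hhs k (n - k) fun hd => hn ?_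
            have := Nat.sub_add_cancel hkn
            exact this ▸ dvd_add hd hdk
          · rfl
        rw [hc, mul_zero]
      · rw [ih k (Finset.mem_range.mp hk) hdk, zero_mul]
    rw [hb, hsum, sub_zero, mul_zero]

lemma psComp_ACoeff (ℓ : ℕ) {h : K⟦X⟧} (hh0 : constantCoeff h ≠ 0) :
    psComp (PowerSeries.mk (ACoeff ℓ h)) (X * h) = h ^ ℓ := by
  ext n
  simp only [psComp, coeff_mk]
  exact ACoeff_spec ℓ hh0 n

lemma psComp_unique (ℓ : ℕ) {h A B : K⟦X⟧} (hh0 : constantCoeff h ≠ 0)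
    (hA : psComp A (X * h) = h ^ ℓ) (hB : psComp B (X * h) = h ^ ℓ) : A = B := by
  ext n
  induction n using Nat.strong_induction_on with
  | _ n ih =>
    have hA' := congrArg (coeff n) hA
    have hB' := congrArg (coeff n) hB
    simp only [psComp, coeff_mk] at hA' hB'
    rw [Finset.sum_range_succ, coeff_Xh_pow_self] at hA' hB'
    have hs : ∑ k ∈ Finset.range n, coeff k A * coeff n ((X * h) ^ k)
        = ∑ k ∈ Finset.range n, coeff k B * coeff n ((X * h) ^ k) :=
      Finset.sum_congr rfl fun k hk => by rw [ih k (Finset.mem_range.mp hk)]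
    have := hA'.trans hB'.symm
    rw [hs] at this
    have := add_left_cancel this
    exact mul_right_cancel₀ (pow_ne_zero n hh0) this

/-- Key identity: multiplying by `h^ℓ` can be expanded through the `A`-sequence. -/
lemma key_expand (ℓ : ℕ) (A P h : K⟦X⟧) (hAe : psComp A (X * h) = h ^ ℓ) (n : ℕ) :
    coeff n (P * h ^ ℓ) =
      ∑ k ∈ Finset.range (n + 1), coeff k A * coeff n (P * (X * h) ^ k) := by
  rw [← hAe, coeff_mul]
  have step1 : ∀ p ∈ antidiagonal n,
      coeff p.1 P * coeff p.2 (psComp A (X * h)) =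
      ∑ k ∈ Finset.range (n + 1),
        coeff k A * (coeff p.1 P * coeff p.2 ((X * h) ^ k)) := by
    intro p hp
    have hp2 : p.2 ≤ n := by
      rw [Finset.HasAntidiagonal.mem_antidiagonal] at hp; omega
    have hext : ∑ k ∈ Finset.range (p.2 + 1), coeff k A * coeff p.2 ((X * h) ^ k)
        = ∑ k ∈ Finset.range (n + 1), coeff k A * coeff p.2 ((X * h) ^ k) := by
      apply Finset.sum_subset
      · exact Finset.range_subset_range.mpr (by omega)
      · intro x hx hnx
        have : ¬ x ≤ p.2 := by
          simp only [Finset.mem_range] at hx hnx; omega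
        rw [coeff_Xh_pow, if_neg this, mul_zero]
    simp only [psComp, coeff_mk]
    rw [hext, Finset.mul_sum]
    exact Finset.sum_congr rfl fun k _ => by ring
  calc ∑ p ∈ antidiagonal n, coeff p.1 P * coeff p.2 (psComp A (X * h))
      = ∑ p ∈ antidiagonal n, ∑ k ∈ Finset.range (n + 1),
          coeff k A * (coeff p.1 P * coeff p.2 ((X * h) ^ k)) :=
        Finset.sum_congr rfl step1
    _ = ∑ k ∈ Finset.range (n + 1), ∑ p ∈ antidiagonal n,
          coeff k A * (coeff p.1 P * coeff p.2 ((X * h) ^ k)) := Finset.sum_comm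
    _ = ∑ k ∈ Finset.range (n + 1), coeff k A * coeff n (P * (X * h) ^ k) := by
        refine Finset.sum_congr rfl fun k _ => ?_
        rw [← Finset.mul_sum, coeff_mul]

end Aux

/-- Existence and uniqueness of the `A`-sequence of a multiple Riordan type array, and the
recurrence it induces. -/
theorem stmt12 {K : Type*} [Field K] [CharZero K] (ℓ : ℕ) (hℓ : 2 ≤ ℓ)
    (g : K⟦X⟧) (f : ℕ → K⟦X⟧)
    (hg : ∀ n, ¬ (ℓ ∣ n) → coeff n g = 0) (hg0 : constantCoeff g ≠ 0)
    (hf : ∀ i < ℓ, ∀ n, ¬ (ℓ ∣ n) → coeff n (f i) = 0)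
    (hf0 : ∀ i < ℓ, constantCoeff (f i) ≠ 0)
    (h : K⟦X⟧) (hhs : ∀ n, ¬ (ℓ ∣ n) → coeff n h = 0) (hh0 : constantCoeff h ≠ 0)
    (hhl : h ^ ℓ = ∏ i ∈ Finset.range ℓ, f i)
    (d : ℕ → ℕ → K) (hd : ∀ n k, d n k = mrEntry ℓ g f n k) :
    (∃! A : K⟦X⟧, (∀ n, ¬ (ℓ ∣ n) → coeff n A = 0) ∧ psComp A (X * h) = h ^ ℓ) ∧
    ∀ A : K⟦X⟧, (∀ n, ¬ (ℓ ∣ n) → coeff n A = 0) → psComp A (X * h) = h ^ ℓ →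
      ∀ n k, ℓ ≤ k →
        d n k = ∑ j ∈ Finset.filter (fun j => j * ℓ ≤ n) (Finset.range (n + 1)),
          coeff (ℓ * j) A * d (n - j * ℓ) (k + ℓ * j - ℓ) := by
  have hℓ0 : 0 < ℓ := by omega
  constructor
  · refine ⟨PowerSeries.mk (ACoeff ℓ h), ⟨?_, psComp_ACoeff ℓ hh0⟩, ?_⟩
    · intro n hn
      rw [coeff_mk]
      exact ACoeff_supp ℓ hhs n hn
    · intro A ⟨_, hAe⟩
      exact psComp_unique ℓ hh0 hAe (psComp_ACoeff ℓ hh0)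
  · intro A hAs hAe n k hk
    set m := k % ℓ with hm
    set q := k / ℓ with hq
    have hq1 : 1 ≤ q := (Nat.one_le_div_iff hℓ0).mpr hk
    have hmlt : m < ℓ := Nat.mod_lt k hℓ0
    have hkqm : ℓ * q + m = k := Nat.div_add_mod k ℓ
    set P : K⟦X⟧ := g * (∏ i ∈ Finset.range m, f i) * (h ^ ℓ) ^ (q - 1) with hP
    -- d n k = coeff n (P * h^ℓ)
    have hd1 : d n k = coeff n (P * h ^ ℓ) := by
      rw [hd, mrEntry, ← hhl, ← hm, ← hq]
      congr 1
      rw [hP]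
      have : (h ^ ℓ) ^ q = (h ^ ℓ) ^ (q - 1) * h ^ ℓ := by
        rw [← pow_succ]
        congr 1
        omega
      rw [this]; ring
    rw [hd1, key_expand ℓ A P h hAe n]
    -- restrict to multiples of ℓ
    rw [← Finset.sum_filter_of_ne (p := fun x => ℓ ∣ x)
      (fun x _ hx => by
        by_contra hdx
        exact hx (by rw [hAs x hdx, zero_mul]))]
    -- reindex by j ↦ ℓ * j
    refine Finset.sum_nbij' (fun x => x / ℓ) (fun j => ℓ * j) ?_ ?_ ?_ ?_ ?_
    · intro a ha
      simp only [Finset.mem_filter, Finset.mem_range] at ha ⊢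
      obtain ⟨ha1, c, rfl⟩ := ha
      rw [Nat.mul_div_cancel_left c hℓ0]
      have h2 : c ≤ ℓ * c := Nat.le_mul_of_pos_left c hℓ0
      have h3 : c * ℓ = ℓ * c := Nat.mul_comm c ℓ
      exact ⟨by omega, by omega⟩
    · intro j hj
      simp only [Finset.mem_filter, Finset.mem_range] at hj ⊢
      have h3 : j * ℓ = ℓ * j := Nat.mul_comm j ℓ
      exact ⟨by omega, dvd_mul_right ℓ j⟩
    · intro a ha
      simp only [Finset.mem_filter] at ha
      exact Nat.mul_div_cancel' ha.2
    · intro j _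
      exact Nat.mul_div_cancel_left j hℓ0
    · intro a ha
      simp only [Finset.mem_filter, Finset.mem_range] at ha
      obtain ⟨han, c, rfl⟩ := ha
      beta_reduce
      rw [Nat.mul_div_cancel_left c hℓ0]
      congr 1
      -- coeff n (P * (X*h)^(ℓ*c)) = d (n - c*ℓ) (k + ℓ*c - ℓ)
      have hcn : ℓ * c ≤ n := by omega
      have hcoeff : coeff n (P * (X * h) ^ (ℓ * c))
          = coeff (n - ℓ * c) (P * h ^ (ℓ * c)) := by
        rw [mul_pow, show P * (X ^ (ℓ * c) * h ^ (ℓ * c)) = P * h ^ (ℓ * c) * X ^ (ℓ * c) by ring,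
          coeff_mul_X_pow', if_pos hcn]
      rw [hcoeff, hd, mrEntry]
      -- index arithmetic
      have hmulq : ℓ * q = ℓ * (q - 1) + ℓ := by
        have : q = (q - 1) + 1 := by omega
        rw [this, Nat.mul_succ, Nat.add_sub_cancel]
      have hidx : k + ℓ * c - ℓ = m + ℓ * ((q - 1) + c) := by
        rw [Nat.mul_add]
        omega
      have hmod : (k + ℓ * c - ℓ) % ℓ = m := by
        rw [hidx, Nat.add_mul_mod_self_left, Nat.mod_eq_of_lt hmlt]
      have hdiv : (k + ℓ * c - ℓ) / ℓ = (q - 1) + c := by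
        rw [hidx, Nat.add_mul_div_left _ _ hℓ0, Nat.div_eq_of_lt hmlt, Nat.zero_add]
      rw [hmod, hdiv, ← hhl, Nat.mul_comm c ℓ]
      congr 1
      rw [hP, pow_add, ← pow_mul]
      ring
end

section
/- For every m, n ∈ ℕ and every element x of a commutative ring R: Σ_{k=0}^{n} C(n,k)·k^m·x^{n−k} = Σ_{k=0}^{min(m,n)} S(m,k)·C(n,k)·k!·(x+1)^{n−k}. -/
/-- Stirling numbers of the second kind: `S(0,0) = 1`, `S(m,k) = 0` for `k > m`, and
`S(m+1,k) = k·S(m,k) + S(m,k−1)`. -/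
def stirling2 : ℕ → ℕ → ℕ
  | 0, 0 => 1
  | 0, _ + 1 => 0
  | _ + 1, 0 => 0
  | m + 1, k + 1 => (k + 1) * stirling2 m (k + 1) + stirling2 m k

lemma stirling2_eq_zero : ∀ {m k : ℕ}, m < k → stirling2 m k = 0 := by
  intro m
  induction m with
  | zero => intro k h; cases k with | zero => omega | succ k => rfl
  | succ m ih =>
    intro k h
    cases k with
    | zero => omega
    | succ k =>
      show (k + 1) * stirling2 m (k + 1) + stirling2 m k = 0
      rw [ih (by omega), ih (by omega)]
      ring

lemma pow_eq_sum_stirling2 (m k : ℕ) :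
    k ^ m = ∑ j ∈ Finset.range (m + 1),
      stirling2 m j * (Nat.choose k j * Nat.factorial j) := by
  induction m with
  | zero => simp [stirling2]
  | succ m ih =>
    have key : ∀ j : ℕ, k * (Nat.choose k j * Nat.factorial j)
        = Nat.choose k (j + 1) * Nat.factorial (j + 1)
          + j * (Nat.choose k j * Nat.factorial j) := by
      intro j
      rcases le_or_gt j k with hj | hj
      · have h1 : Nat.choose k (j + 1) * (j + 1) = Nat.choose k j * (k - j) :=
          Nat.choose_succ_right_eq k j
        have h2 : k = (k - j) + j := by omega
        calc k * (Nat.choose k j * Nat.factorial j)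
            = (k - j) * (Nat.choose k j * Nat.factorial j)
              + j * (Nat.choose k j * Nat.factorial j) := by rw [← Nat.add_mul, ← h2]
          _ = Nat.choose k (j + 1) * Nat.factorial (j + 1)
              + j * (Nat.choose k j * Nat.factorial j) := by
                rw [Nat.factorial_succ, ← Nat.mul_assoc, ← Nat.mul_assoc,
                  Nat.mul_comm (k - j) (Nat.choose k j), ← h1]
                ring_nf
      · rw [Nat.choose_eq_zero_of_lt hj, Nat.choose_eq_zero_of_lt (by omega)]
        ring
    have : k ^ (m + 1) = ∑ j ∈ Finset.range (m + 1),
        stirling2 m j * (Nat.choose k (j + 1) * Nat.factorial (j + 1))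
      + ∑ j ∈ Finset.range (m + 1),
        stirling2 m j * (j * (Nat.choose k j * Nat.factorial j)) := by
      rw [pow_succ, ih, Finset.sum_mul, ← Finset.sum_add_distrib]
      refine Finset.sum_congr rfl fun j _ => ?_
      rw [Nat.mul_comm _ k, ← Nat.mul_assoc, Nat.mul_comm k, Nat.mul_assoc, key j,
        Nat.mul_add]
    rw [this]
    -- RHS: peel off the j = 0 term (which is 0) and shift index
    rw [Finset.sum_range_succ' (fun j => stirling2 (m + 1) j * (Nat.choose k j * Nat.factorial j))]
    have h0 : stirling2 (m + 1) 0 * (Nat.choose k 0 * Nat.factorial 0) = 0 := by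
      simp [stirling2]
    rw [h0, Nat.add_zero]
    have hstep : ∀ j, stirling2 (m + 1) (j + 1)
        = (j + 1) * stirling2 m (j + 1) + stirling2 m j := fun j => rfl
    -- second sum: shift index using that the j = 0 term is 0
    have hshift : ∑ j ∈ Finset.range (m + 1),
        stirling2 m j * (j * (Nat.choose k j * Nat.factorial j))
        = ∑ j ∈ Finset.range (m + 1),
          (j + 1) * stirling2 m (j + 1) * (Nat.choose k (j + 1) * Nat.factorial (j + 1)) := by
      rw [Finset.sum_range_succ' (fun j => stirling2 m j * (j * (Nat.choose k j * Nat.factorial j)))]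
      rw [Finset.sum_range_succ
        (fun j => (j + 1) * stirling2 m (j + 1) * (Nat.choose k (j + 1) * Nat.factorial (j + 1)))]
      rw [stirling2_eq_zero (Nat.lt_succ_self m)]
      simp [Nat.mul_comm, Nat.mul_assoc, Nat.mul_left_comm]
    rw [hshift, ← Finset.sum_add_distrib]
    refine Finset.sum_congr rfl fun j _ => ?_
    rw [hstep j, Nat.add_mul]
    ring

lemma sum_choose_mul_choose_pow {R : Type*} [CommRing R] (n j : ℕ) (x : R) :
    ∑ k ∈ Finset.range (n + 1), ((Nat.choose n k * Nat.choose k j : ℕ) : R) * x ^ (n - k)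
      = (Nat.choose n j : R) * (x + 1) ^ (n - j) := by
  rcases le_or_gt j n with hj | hj
  · have hsub : Finset.Ico j (n + 1) ⊆ Finset.range (n + 1) := by
      rw [Finset.range_eq_Ico]; exact Finset.Ico_subset_Ico (Nat.zero_le _) le_rfl
    rw [← Finset.sum_subset hsub (by
      intro k hk hk2
      simp only [Finset.mem_range] at hk
      simp only [Finset.mem_Ico, not_and, not_le] at hk2
      have : k < j := by by_contra h; exact absurd hk (by simp [hk2 (by omega)]) -- fix below
      rw [Nat.choose_eq_zero_of_lt this]
      simp)]
    rw [Finset.sum_Ico_eq_sum_range]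
    have hN : n + 1 - j = (n - j) + 1 := by omega
    rw [hN]
    have : ∀ i ∈ Finset.range ((n - j) + 1),
        ((Nat.choose n (j + i) * Nat.choose (j + i) j : ℕ) : R) * x ^ (n - (j + i))
        = (Nat.choose n j : R) * (((Nat.choose (n - j) i : ℕ) : R) * x ^ ((n - j) - i)) := by
      intro i hi
      simp only [Finset.mem_range] at hi
      have h1 : Nat.choose n (j + i) * Nat.choose (j + i) j
          = Nat.choose n j * Nat.choose (n - j) i := by
        rw [Nat.choose_mul (by omega)]
        congr 2
        omega
      rw [h1]
      have h2 : n - (j + i) = (n - j) - i := by omega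
      rw [h2]
      push_cast
      ring
    rw [Finset.sum_congr rfl this, ← Finset.mul_sum]
    congr 1
    have := add_pow (1 : R) x (n - j)
    simp only [one_pow, one_mul] at this
    rw [add_comm x 1, this]
    refine Finset.sum_congr rfl fun i hi => ?_
    ring
  · have h1 : Nat.choose n j = 0 := Nat.choose_eq_zero_of_lt hj
    rw [h1]
    rw [Finset.sum_eq_zero]
    · simp
    · intro k hk
      simp only [Finset.mem_range] at hk
      rw [Nat.choose_eq_zero_of_lt (show k < j by omega)]
      simp

/-- An umbral identity: `Σ_{k=0}^n C(n,k) k^m x^{n−k} = Σ_{k=0}^{m∧n} S(m,k) C(n,k) k! (x+1)^{n−k}`. -/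
theorem stmt14 {R : Type*} [CommRing R] (m n : ℕ) (x : R) :
    ∑ k ∈ Finset.range (n + 1), (Nat.choose n k * k ^ m : ℕ) * x ^ (n - k)
      = ∑ k ∈ Finset.range (min m n + 1),
          (stirling2 m k * Nat.choose n k * Nat.factorial k : ℕ) * (x + 1) ^ (n - k) := by
  have lhs_eq : ∑ k ∈ Finset.range (n + 1), ((Nat.choose n k * k ^ m : ℕ) : R) * x ^ (n - k)
      = ∑ j ∈ Finset.range (m + 1),
          ((stirling2 m j * Nat.choose n j * Nat.factorial j : ℕ) : R) * (x + 1) ^ (n - j) := by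
    have step1 : ∀ k ∈ Finset.range (n + 1),
        ((Nat.choose n k * k ^ m : ℕ) : R) * x ^ (n - k)
        = ∑ j ∈ Finset.range (m + 1),
            ((stirling2 m j * Nat.factorial j : ℕ) : R)
              * (((Nat.choose n k * Nat.choose k j : ℕ) : R) * x ^ (n - k)) := by
      intro k _
      rw [pow_eq_sum_stirling2 m k]
      push_cast
      rw [Finset.mul_sum, Finset.sum_mul]
      exact Finset.sum_congr rfl fun j _ => by ring
    rw [Finset.sum_congr rfl step1, Finset.sum_comm]
    refine Finset.sum_congr rfl fun j _ => ?_
    rw [← Finset.mul_sum, sum_choose_mul_choose_pow]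
    push_cast
    ring
  rw [lhs_eq]
  symm
  apply Finset.sum_subset
  · apply Finset.range_subset_range.mpr; omega
  · intro j hj hj2
    simp only [Finset.mem_range] at hj hj2
    have hjn : n < j := by omega
    rw [Nat.choose_eq_zero_of_lt hjn]
    simp
end
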